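/- arXiv:2404.01118 — 2 statements merged into one kernel-verified Lean document; each statement's English description precedes it below -/
import Mathlib

section
/- Let $\{X_n\}_{n\ge 1}$ be a sequence of independent random variables in a sub-linear expectation space $(\Omega, \mathcal{H}, \mathbb{E})$ satisfying the condition (CC) with a countable-dimensionally weakly compact family $\mathcal{P}$ of probability measures. If $\sum_{n=1}^{\infty} \underline{v}(X_n < 1) < \infty$, where $\underline{v}$ is a lower capacity associated with $\mathbb{E}$, then there exists a probability measure $P \in \mathcal{P}$ such that $P(X_n < 1 \text{ i.o.}) = 0$, i.e., $P\big(\bigcup_{m=1}^{\infty} \bigcap_{i=m}^{\infty} \{X_i \ge 1\}\big) = 1$. -/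
open Filter MeasureTheory

noncomputable section

/-- The class `C_{l,Lip}` of local Lipschitz functions with polynomial growth. -/
def ClLip {n : ℕ} (φ : (Fin n → ℝ) → ℝ) : Prop :=
  ∃ C : ℝ, 0 < C ∧ ∃ m : ℕ, ∀ x y : Fin n → ℝ,
    |φ x - φ y| ≤ C * (1 + ‖x‖ ^ m + ‖y‖ ^ m) * ‖x - y‖

/-- A sub-linear expectation space `(Ω, H, E)` in the sense of Peng. -/
structure SLE (Ω : Type*) where
  H : Set (Ω → ℝ)
  E : (Ω → ℝ) → ℝ
  const_mem : ∀ c : ℝ, (fun _ => c) ∈ H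
  comp_mem : ∀ (n : ℕ) (φ : (Fin n → ℝ) → ℝ), ClLip φ →
    ∀ X : Fin n → Ω → ℝ, (∀ i, X i ∈ H) → (fun ω => φ (fun i => X i ω)) ∈ H
  mono : ∀ X Y, X ∈ H → Y ∈ H → (∀ ω, X ω ≤ Y ω) → E X ≤ E Y
  isConst : ∀ c : ℝ, E (fun _ => c) = c
  subadd : ∀ X Y, X ∈ H → Y ∈ H → E (fun ω => X ω + Y ω) ≤ E X + E Y
  poshom : ∀ c : ℝ, 0 < c → ∀ X, X ∈ H → E (fun ω => c * X ω) = c * E X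

variable {Ω : Type*}

/-- The conjugate (lower) expectation. -/
def SLE.eps (S : SLE Ω) (X : Ω → ℝ) : ℝ := -S.E (fun ω => -X ω)

/-- `Y` (a `q`-vector) is independent of `X` (a `p`-vector) in Peng's sense. -/
def IndepVec (S : SLE Ω) {p q : ℕ} (X : Fin p → Ω → ℝ) (Y : Fin q → Ω → ℝ) : Prop :=
  ∀ φ : (Fin p → ℝ) → (Fin q → ℝ) → ℝ,
    (∃ K : NNReal, LipschitzWith K (Function.uncurry φ)) →
    (∃ M : ℝ, ∀ x y, |φ x y| ≤ M) →
    S.E (fun ω => φ (fun i => X i ω) (fun j => Y j ω)) =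
      S.E (fun ω => S.E (fun ω' => φ (fun i => X i ω) (fun j => Y j ω')))

/-- A sequence is independent if `X_{i+1}` is independent of `(X_0, …, X_i)`. -/
def IndepSeq (S : SLE Ω) (X : ℕ → Ω → ℝ) : Prop :=
  ∀ i : ℕ, IndepVec S (fun j : Fin (i + 1) => X j.val) (fun _ : Fin 1 => X (i + 1))

/-- The upper capacity `V̂` generated by the sub-linear expectation. -/
def hatV (S : SLE Ω) (A : Set Ω) : ℝ :=
  sInf {r | ∃ ξ ∈ S.H, (∀ ω, Set.indicator A (fun _ => (1 : ℝ)) ω ≤ ξ ω) ∧ S.E ξ = r}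

/-- The countably sub-additive extension `V*` of `V̂`. -/
def Vstar (S : SLE Ω) (A : Set Ω) : ℝ :=
  sInf {r | ∃ B : ℕ → Set Ω, (A ⊆ ⋃ n, B n) ∧
    Summable (fun n => hatV S (B n)) ∧ r = ∑' n, hatV S (B n)}

/-- Truncation `X^{(c)} = (-c) ∨ X ∧ c`. -/
def trunc (c : ℝ) (X : Ω → ℝ) : Ω → ℝ := fun ω => max (-c) (min (X ω) c)

/-- Membership in `H₁ = {X ∈ H : lim_{c,d→∞} E[(|X| ∧ d - c)⁺] = 0}`. -/
def memH1 (S : SLE Ω) (X : Ω → ℝ) : Prop :=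
  X ∈ S.H ∧
    Tendsto (fun cd : ℝ × ℝ => S.E (fun ω => max (min |X ω| cd.2 - cd.1) 0))
      (atTop ×ˢ atTop) (nhds 0)

/-- Two real random variables are identically distributed (Peng's sense). -/
def IdentDist1 (S : SLE Ω) (A B : Ω → ℝ) : Prop :=
  ∀ φ : ℝ → ℝ, (∃ K : NNReal, LipschitzWith K φ) → (∃ M : ℝ, ∀ x, |φ x| ≤ M) →
    S.E (fun ω => φ (A ω)) = S.E (fun ω => φ (B ω))

/-- `m`-dependence: `(X_{n+m+1}, …, X_{n+j})` is independent of `(X_1, …, X_n)`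
(indices here are 0-based: `X 0` plays the role of `X_1`). -/
def MDep (S : SLE Ω) (m : ℕ) (X : ℕ → Ω → ℝ) : Prop :=
  ∀ n : ℕ, 1 ≤ n → ∀ j : ℕ, m + 1 ≤ j →
    IndepVec S (fun i : Fin n => X i.val) (fun i : Fin (j - m) => X (n + m + i.val))

/-- Linear stationarity: `X_1 + ⋯ + X_n ≐ X_{1+p} + ⋯ + X_{n+p}`. -/
def LinStat (S : SLE Ω) (X : ℕ → Ω → ℝ) : Prop :=
  ∀ n : ℕ, 1 ≤ n → ∀ p : ℕ,
    IdentDist1 S (fun ω => ∑ i ∈ Finset.range n, X i ω)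
      (fun ω => ∑ i ∈ Finset.range n, X (p + i) ω)

/-- Condition (CC): `E` is represented by a countable-dimensionally weakly
compact family `P` of probability measures. -/
def CC [MeasurableSpace Ω] (S : SLE Ω) (P : Set (Measure Ω)) : Prop :=
  P.Nonempty ∧ (∀ p ∈ P, IsProbabilityMeasure p) ∧
  (∀ X ∈ S.H, (∃ M : ℝ, ∀ ω, |X ω| ≤ M) → S.E X = ⨆ p ∈ P, ∫ ω, X ω ∂p) ∧
  (∀ Y : ℕ → Ω → ℝ, (∀ n, Y n ∈ S.H ∧ ∃ M : ℝ, ∀ ω, |Y n ω| ≤ M) →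
    ∀ p : ℕ → Measure Ω, (∀ n, p n ∈ P) →
      ∃ k : ℕ → ℕ, StrictMono k ∧ ∃ Q ∈ P,
        ∀ (d : ℕ) (φ : (Fin d → ℝ) → ℝ),
          (∃ K : NNReal, LipschitzWith K φ) → (∃ M : ℝ, ∀ x, |φ x| ≤ M) →
          Tendsto (fun j => ∫ ω, φ (fun i : Fin d => Y i.val ω) ∂(p (k j))) atTop
            (nhds (∫ ω, φ (fun i : Fin d => Y i.val ω) ∂Q)))


/-! ### the cut-off function gk -/

def gk (k : ℕ) (x : ℝ) : ℝ := min 1 (max 0 ((k : ℝ) * (x - 1) + 1))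

lemma gk_nonneg (k : ℕ) (x : ℝ) : 0 ≤ gk k x := by
  unfold gk
  rcases le_total (1:ℝ) (max 0 ((k : ℝ) * (x - 1) + 1)) with h | h
  · rw [min_eq_left h]; norm_num
  · rw [min_eq_right h]; exact le_max_left _ _

lemma gk_le_one (k : ℕ) (x : ℝ) : gk k x ≤ 1 := min_le_left _ _

lemma gk_of_one_le (k : ℕ) {x : ℝ} (hx : 1 ≤ x) : gk k x = 1 := by
  unfold gk
  have h : (1:ℝ) ≤ (k : ℝ) * (x - 1) + 1 := by nlinarith [Nat.cast_nonneg (α := ℝ) k]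
  rw [min_eq_left (le_trans h (le_max_right _ _))]

lemma gk_lip (k : ℕ) (x y : ℝ) : |gk k x - gk k y| ≤ (k : ℝ) * |x - y| := by
  have h1 := abs_min_sub_min_le_max (1:ℝ) (max 0 ((k : ℝ) * (x - 1) + 1))
      1 (max 0 ((k : ℝ) * (y - 1) + 1))
  have h2 := abs_max_sub_max_le_max (0:ℝ) ((k : ℝ) * (x - 1) + 1)
      0 ((k : ℝ) * (y - 1) + 1)
  have h3 : |((k : ℝ) * (x - 1) + 1) - ((k : ℝ) * (y - 1) + 1)| = (k : ℝ) * |x - y| := by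
    rw [show ((k : ℝ) * (x - 1) + 1) - ((k : ℝ) * (y - 1) + 1) = (k : ℝ) * (x - y) by ring,
      abs_mul, abs_of_nonneg (Nat.cast_nonneg (α := ℝ) k)]
  have hk : (0:ℝ) ≤ (k : ℝ) * |x - y| := by positivity
  unfold gk
  calc |min 1 (max 0 ((k : ℝ) * (x - 1) + 1)) - min 1 (max 0 ((k : ℝ) * (y - 1) + 1))|
      ≤ max |(1:ℝ) - 1| |max 0 ((k : ℝ) * (x - 1) + 1) - max 0 ((k : ℝ) * (y - 1) + 1)| := h1
    _ ≤ max |(1:ℝ) - 1| (max |(0:ℝ) - 0| |((k : ℝ) * (x - 1) + 1) - ((k : ℝ) * (y - 1) + 1)|) := by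
        exact max_le_max le_rfl h2
    _ ≤ (k : ℝ) * |x - y| := by
        simp only [sub_self, abs_zero, h3]
        exact max_le hk (max_le hk le_rfl)

/-- monotone decreasing in `k` -/
lemma gk_anti {k k' : ℕ} (h : k ≤ k') (x : ℝ) : gk k' x ≤ gk k x := by
  rcases le_total (1:ℝ) x with hx | hx
  · rw [gk_of_one_le k hx, gk_of_one_le k' hx]
  · unfold gk
    apply min_le_min le_rfl
    apply max_le_max le_rfl
    have : (k' : ℝ) * (x - 1) ≤ (k : ℝ) * (x - 1) := by
      apply mul_le_mul_of_nonpos_right (by exact_mod_cast h) (by linarith)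
    linarith

/-- if `gk k x ≥ 1/2` then `x ≥ 1 - 1/(2k)` (for `k ≥ 1`). -/
lemma ge_of_gk_half {k : ℕ} (hk : 1 ≤ k) {x : ℝ} (h : (2⁻¹ : ℝ) ≤ gk k x) :
    1 - ((2:ℝ) * k)⁻¹ ≤ x := by
  have hkpos : (0:ℝ) < (k:ℝ) := by exact_mod_cast hk
  have h1 : (2⁻¹ : ℝ) ≤ max 0 ((k : ℝ) * (x - 1) + 1) := le_trans h (min_le_right _ _)
  have h2 : (2⁻¹ : ℝ) ≤ (k : ℝ) * (x - 1) + 1 := by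
    rcases max_cases (0:ℝ) ((k : ℝ) * (x - 1) + 1) with ⟨he, _⟩ | ⟨he, _⟩
    · rw [he] at h1; norm_num at h1
    · rw [he] at h1; exact h1
  have h5 : ((2:ℝ) * k) * ((2:ℝ) * k)⁻¹ = 1 := mul_inv_cancel₀ (by positivity)
  nlinarith [h2, h5, inv_pos.mpr (show (0:ℝ) < 2 * k by positivity)]


/-! ### Lipschitz toolkit -/

section lip
variable {n : ℕ}

/-- plain Lipschitz estimate with real constant -/
def ALip (φ : (Fin n → ℝ) → ℝ) (C : ℝ) : Prop :=
  ∀ x y, |φ x - φ y| ≤ C * dist x y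

lemma ALip.clLip {φ : (Fin n → ℝ) → ℝ} {C : ℝ} (h : ALip φ C) : ClLip φ := by
  refine ⟨|C| + 1, by positivity, 0, fun x y => ?_⟩
  have := h x y
  have hd : dist x y = ‖x - y‖ := dist_eq_norm x y
  have h0 : (0:ℝ) ≤ ‖x - y‖ := norm_nonneg _
  have hC : C * dist x y ≤ (|C| + 1) * ‖x - y‖ := by
    rw [hd] at *
    have : C ≤ |C| + 1 := by have := le_abs_self C; linarith
    nlinarith
  simp only [pow_zero]
  have h2 : (|C| + 1) * ‖x - y‖ ≤ (|C| + 1) * (1 + 1 + 1) * ‖x - y‖ := by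
    nlinarith [abs_nonneg C]
  have h3 : C * ‖x - y‖ ≤ (|C| + 1) * ‖x - y‖ := by
    nlinarith [le_abs_self C]
  rw [hd] at this
  linarith

lemma alip_const (c : ℝ) : ALip (n := n) (fun _ => c) 0 := by
  intro x y; simp

lemma alip_nonneg_dist (x y : Fin n → ℝ) : (0:ℝ) ≤ dist x y := dist_nonneg

lemma alip_coord (k : ℕ) (i : ℕ) (hi : i < n) :
    ALip (fun x : Fin n → ℝ => gk k (x ⟨i, hi⟩)) (k : ℝ) := by
  intro x y
  calc |gk k (x ⟨i, hi⟩) - gk k (y ⟨i, hi⟩)| ≤ (k:ℝ) * |x ⟨i, hi⟩ - y ⟨i, hi⟩| :=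
        gk_lip _ _ _
    _ ≤ (k:ℝ) * dist x y := by
        have h1 : |x ⟨i, hi⟩ - y ⟨i, hi⟩| = dist (x ⟨i, hi⟩) (y ⟨i, hi⟩) := (Real.dist_eq _ _).symm
        rw [h1]
        exact mul_le_mul_of_nonneg_left (dist_le_pi_dist x y _) (Nat.cast_nonneg _)

lemma alip_add {φ ψ : (Fin n → ℝ) → ℝ} {C D : ℝ} (hφ : ALip φ C) (hψ : ALip ψ D) :
    ALip (fun x => φ x + ψ x) (C + D) := by
  intro x y
  calc |φ x + ψ x - (φ y + ψ y)| = |(φ x - φ y) + (ψ x - ψ y)| := by ring_nf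
    _ ≤ |φ x - φ y| + |ψ x - ψ y| := abs_add_le _ _
    _ ≤ C * dist x y + D * dist x y := add_le_add (hφ x y) (hψ x y)
    _ = (C + D) * dist x y := by ring

lemma alip_sub {φ ψ : (Fin n → ℝ) → ℝ} {C D : ℝ} (hφ : ALip φ C) (hψ : ALip ψ D) :
    ALip (fun x => φ x - ψ x) (C + D) := by
  intro x y
  calc |φ x - ψ x - (φ y - ψ y)| = |(φ x - φ y) + -(ψ x - ψ y)| := by ring_nf
    _ ≤ |φ x - φ y| + |-(ψ x - ψ y)| := abs_add_le _ _
    _ ≤ C * dist x y + D * dist x y := by rw [abs_neg]; exact add_le_add (hφ x y) (hψ x y)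
    _ = (C + D) * dist x y := by ring

lemma alip_smul {φ : (Fin n → ℝ) → ℝ} {C : ℝ} (a : ℝ) (hφ : ALip φ C) :
    ALip (fun x => a * φ x) (|a| * C) := by
  intro x y
  calc |a * φ x - a * φ y| = |a| * |φ x - φ y| := by rw [← abs_mul]; ring_nf
    _ ≤ |a| * (C * dist x y) := mul_le_mul_of_nonneg_left (hφ x y) (abs_nonneg a)
    _ = |a| * C * dist x y := by ring

lemma alip_sum {ι : Type*} (s : Finset ι) (u : ι → (Fin n → ℝ) → ℝ) (C : ι → ℝ)
    (h : ∀ i ∈ s, ALip (u i) (C i)) :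
    ALip (fun x => ∑ i ∈ s, u i x) (∑ i ∈ s, C i) := by
  classical
  induction s using Finset.induction_on with
  | empty => simpa using alip_const (n := n) 0
  | @insert a s' hni ih =>
      rw [Finset.sum_insert hni]
      have h1 : ALip (fun x => u a x + ∑ i ∈ s', u i x) (C a + ∑ i ∈ s', C i) :=
        alip_add (h a (Finset.mem_insert_self _ _))
          (ih fun i hi => h i (Finset.mem_insert_of_mem hi))
      intro x y
      have := h1 x y
      simpa [Finset.sum_insert hni] using this

/-- product of `[0,1]`-valued Lipschitz functions -/
lemma alip_prod {ι : Type*} (s : Finset ι) (u : ι → (Fin n → ℝ) → ℝ) (C : ι → ℝ)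
    (h : ∀ i ∈ s, ALip (u i) (C i)) (h01 : ∀ i ∈ s, ∀ x, 0 ≤ u i x ∧ u i x ≤ 1) :
    ALip (fun x => ∏ i ∈ s, u i x) (∑ i ∈ s, C i) := by
  classical
  induction s using Finset.induction_on with
  | empty => simpa using alip_const (n := n) 1
  | @insert a s' hni ih =>
      have hrec : ALip (fun x => ∏ i ∈ s', u i x) (∑ i ∈ s', C i) :=
        ih (fun i hi => h i (Finset.mem_insert_of_mem hi))
          (fun i hi => h01 i (Finset.mem_insert_of_mem hi))
      intro x y
      simp only [Finset.prod_insert hni, Finset.sum_insert hni]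
      have hax := h01 a (Finset.mem_insert_self _ _) x
      have hay := h01 a (Finset.mem_insert_self _ _) y
      have hpx : 0 ≤ ∏ i ∈ s', u i x ∧ ∏ i ∈ s', u i x ≤ 1 :=
        ⟨Finset.prod_nonneg fun i hi => (h01 i (Finset.mem_insert_of_mem hi) x).1,
         Finset.prod_le_one (fun i hi => (h01 i (Finset.mem_insert_of_mem hi) x).1)
           (fun i hi => (h01 i (Finset.mem_insert_of_mem hi) x).2)⟩
      have hpy : 0 ≤ ∏ i ∈ s', u i y ∧ ∏ i ∈ s', u i y ≤ 1 :=
        ⟨Finset.prod_nonneg fun i hi => (h01 i (Finset.mem_insert_of_mem hi) y).1,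
         Finset.prod_le_one (fun i hi => (h01 i (Finset.mem_insert_of_mem hi) y).1)
           (fun i hi => (h01 i (Finset.mem_insert_of_mem hi) y).2)⟩
      have key : |u a x * ∏ i ∈ s', u i x - u a y * ∏ i ∈ s', u i y|
          ≤ |u a x - u a y| + |∏ i ∈ s', u i x - ∏ i ∈ s', u i y| := by
        have expand : u a x * ∏ i ∈ s', u i x - u a y * ∏ i ∈ s', u i y
            = (u a x - u a y) * ∏ i ∈ s', u i x + u a y * (∏ i ∈ s', u i x - ∏ i ∈ s', u i y) := by
          ring
        rw [expand]
        calc |(u a x - u a y) * ∏ i ∈ s', u i x + u a y * (∏ i ∈ s', u i x - ∏ i ∈ s', u i y)|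
            ≤ |(u a x - u a y) * ∏ i ∈ s', u i x| + |u a y * (∏ i ∈ s', u i x - ∏ i ∈ s', u i y)| :=
              abs_add_le _ _
          _ ≤ |u a x - u a y| + |∏ i ∈ s', u i x - ∏ i ∈ s', u i y| := by
              rw [abs_mul, abs_mul]
              have b1 : |∏ i ∈ s', u i x| ≤ 1 := abs_le.mpr ⟨by linarith [hpx.1], hpx.2⟩
              have b2 : |u a y| ≤ 1 := abs_le.mpr ⟨by linarith [hay.1], hay.2⟩
              nlinarith [abs_nonneg (u a x - u a y), abs_nonneg (∏ i ∈ s', u i x - ∏ i ∈ s', u i y)]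
      calc |u a x * ∏ i ∈ s', u i x - u a y * ∏ i ∈ s', u i y|
          ≤ |u a x - u a y| + |∏ i ∈ s', u i x - ∏ i ∈ s', u i y| := key
        _ ≤ C a * dist x y + (∑ i ∈ s', C i) * dist x y :=
            add_le_add (h a (Finset.mem_insert_self _ _) x y) (hrec x y)
        _ = (C a + ∑ i ∈ s', C i) * dist x y := by ring

end lip

/-! ### basic SLE lemmas -/

section basics
variable (S : SLE Ω)

lemma SLE.memH_comp {n : ℕ} (φ : (Fin n → ℝ) → ℝ) {C : ℝ} (h : ALip φ C)
    (X : Fin n → Ω → ℝ) (hX : ∀ i, X i ∈ S.H) :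
    (fun ω => φ (fun i => X i ω)) ∈ S.H :=
  S.comp_mem n φ h.clLip X hX

lemma SLE.memH_affine {Z : Ω → ℝ} (hZ : Z ∈ S.H) (a c : ℝ) :
    (fun ω => a * Z ω + c) ∈ S.H := by
  have h : ALip (n := 1) (fun x => a * x 0 + c) (|a| * 1) := by
    intro x y
    have h1 : |a * x 0 + c - (a * y 0 + c)| = |a| * |x 0 - y 0| := by
      rw [← abs_mul]; ring_nf
    rw [h1]
    have h2 : |x 0 - y 0| = dist (x 0) (y 0) := Real.dist_eq _ _
    rw [h2]
    rw [mul_one]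
    exact mul_le_mul_of_nonneg_left (by simpa using dist_le_pi_dist x y 0) (abs_nonneg a)
  exact S.memH_comp _ h (fun _ => Z) (fun _ => hZ)

lemma SLE.memH_neg {Z : Ω → ℝ} (hZ : Z ∈ S.H) : (fun ω => -Z ω) ∈ S.H := by
  have := S.memH_affine hZ (-1) 0
  simpa using this

lemma SLE.E_mono' {Z W : Ω → ℝ} (hZ : Z ∈ S.H) (hW : W ∈ S.H) (h : ∀ ω, Z ω ≤ W ω) :
    S.E Z ≤ S.E W := S.mono Z W hZ hW h

lemma SLE.E_le_const {Z : Ω → ℝ} (hZ : Z ∈ S.H) {c : ℝ} (h : ∀ ω, Z ω ≤ c) :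
    S.E Z ≤ c := by
  have := S.mono Z (fun _ => c) hZ (S.const_mem c) h
  rwa [S.isConst c] at this

lemma SLE.const_le_E {Z : Ω → ℝ} (hZ : Z ∈ S.H) {c : ℝ} (h : ∀ ω, c ≤ Z ω) :
    c ≤ S.E Z := by
  have := S.mono (fun _ => c) Z (S.const_mem c) hZ h
  rwa [S.isConst c] at this

/-- translation invariance -/
lemma SLE.E_add_const {Z : Ω → ℝ} (hZ : Z ∈ S.H) (c : ℝ) :
    S.E (fun ω => Z ω + c) = S.E Z + c := by
  have h1 : S.E (fun ω => Z ω + c) ≤ S.E Z + c := by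
    have := S.subadd Z (fun _ => c) hZ (S.const_mem c)
    rwa [S.isConst c] at this
  have h2 : S.E Z ≤ S.E (fun ω => Z ω + c) + -c := by
    have hmem : (fun ω => Z ω + c) ∈ S.H := by
      have := S.memH_affine hZ 1 c; simpa using this
    have := S.subadd (fun ω => Z ω + c) (fun _ => -c) hmem (S.const_mem (-c))
    rw [S.isConst (-c)] at this
    have he : S.E (fun ω => Z ω + c + -c) = S.E Z := by
      congr 1; funext ω; ring
    linarith [he ▸ this]
  linarith

/-- positive homogeneity including zero -/
lemma SLE.E_smul {Z : Ω → ℝ} (hZ : Z ∈ S.H) {a : ℝ} (ha : 0 ≤ a) :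
    S.E (fun ω => a * Z ω) = a * S.E Z := by
  rcases eq_or_lt_of_le ha with h | h
  · have h0 : a = 0 := h.symm
    subst h0
    simpa using S.isConst 0
  · exact S.poshom a h Z hZ

end basics

/-! ### integrability of bounded elements of H under every measure of a (CC) family -/

section integ
variable [MeasurableSpace Ω] {S : SLE Ω} {P : Set (Measure Ω)} (hCC : CC S P)

lemma CC.nonempty_omega (hCC : CC S P) : Nonempty Ω := by
  obtain ⟨p₀, hp₀⟩ := hCC.1
  haveI := hCC.2.1 p₀ hp₀
  by_contra h
  have he : (Set.univ : Set Ω) = ∅ := by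
    ext ω; exact absurd ⟨ω⟩ h
  have := measure_univ (μ := p₀)
  rw [he, measure_empty] at this
  exact zero_ne_one this

lemma CC.integral_le_E (hCC : CC S P) {Z : Ω → ℝ} (hZ : Z ∈ S.H) {c : ℝ}
    (hb : ∀ ω, |Z ω| ≤ c) {p : Measure Ω} (hp : p ∈ P) :
    ∫ ω, Z ω ∂p ≤ S.E Z := by
  have hrep := hCC.2.2.1 Z hZ ⟨c, hb⟩
  rw [hrep]
  have hBdd : BddAbove (Set.range fun q => ⨆ _ : q ∈ P, ∫ ω, Z ω ∂q) := by
    refine ⟨max c 0, ?_⟩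
    rintro x ⟨q, rfl⟩
    show (⨆ _ : q ∈ P, ∫ ω, Z ω ∂q) ≤ max c 0
    by_cases hq : q ∈ P
    · rw [ciSup_pos hq]
      haveI := hCC.2.1 q hq
      have h1 : ‖∫ ω, Z ω ∂q‖ ≤ c * (q Set.univ).toReal :=
        norm_integral_le_of_norm_le_const (Filter.Eventually.of_forall fun ω => by
          simpa [Real.norm_eq_abs] using hb ω)
      rw [measure_univ] at h1
      simp only [ENNReal.toReal_one, mul_one] at h1
      exact le_trans (le_trans (le_abs_self _) h1) (le_max_left _ _)
    · haveI : IsEmpty (q ∈ P) := ⟨hq⟩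
      rw [Real.iSup_of_isEmpty]
      exact le_max_right _ _
  calc ∫ ω, Z ω ∂p = ⨆ _ : p ∈ P, ∫ ω, Z ω ∂p :=
        (ciSup_pos (f := fun _ : p ∈ P => ∫ ω, Z ω ∂p) hp).symm
    _ ≤ ⨆ q, ⨆ _ : q ∈ P, ∫ ω, Z ω ∂q := le_ciSup hBdd p

lemma CC.eps_le_integral (hCC : CC S P) {Z : Ω → ℝ} (hZ : Z ∈ S.H) {c : ℝ}
    (hb : ∀ ω, |Z ω| ≤ c) {p : Measure Ω} (hp : p ∈ P) :
    S.eps Z ≤ ∫ ω, Z ω ∂p := by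
  have hneg : (fun ω => -Z ω) ∈ S.H := S.memH_neg hZ
  have hbneg : ∀ ω, |(-Z ω : ℝ)| ≤ c := fun ω => by rw [abs_neg]; exact hb ω
  have h := hCC.integral_le_E hneg hbneg hp
  rw [integral_neg] at h
  unfold SLE.eps
  linarith

lemma CC.integrable (hCC : CC S P) {Z : Ω → ℝ} (hZ : Z ∈ S.H) {c : ℝ}
    (hb : ∀ ω, |Z ω| ≤ c) {p : Measure Ω} (hp : p ∈ P) :
    Integrable Z p := by
  haveI := hCC.2.1 p hp
  obtain ⟨ω₀⟩ := hCC.nonempty_omega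
  have hc0 : 0 ≤ c := le_trans (abs_nonneg _) (hb ω₀)
  by_contra hni
  set W : Ω → ℝ := fun ω => Z ω + -(c + 1) with hW
  have hWmem : W ∈ S.H := by
    have := S.memH_affine hZ 1 (-(c+1)); simpa [hW] using this
  have hWb : ∀ ω, |W ω| ≤ 2 * c + 1 := by
    intro ω
    have := hb ω
    rw [hW]
    simp only [abs_le] at *
    constructor <;> [linarith [this.1]; linarith [this.2]]
  have hWni : ¬ Integrable W p := by
    intro hint
    apply hni
    have h2 : Integrable (fun ω => W ω + (c+1)) p := hint.add (integrable_const _)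
    have h3 : (fun ω => W ω + (c+1)) = Z := by funext ω; rw [hW]; ring
    rwa [h3] at h2
  have hz : ∫ ω, W ω ∂p = 0 := integral_undef hWni
  have hle : ∫ ω, W ω ∂p ≤ S.E W := hCC.integral_le_E hWmem hWb hp
  have hEW : S.E W = S.E Z + -(c+1) := S.E_add_const hZ _
  have hEZ : S.E Z ≤ c := S.E_le_const hZ fun ω => le_trans (le_abs_self _) (hb ω)
  rw [hz, hEW] at hle
  linarith

end integ

/-! ### the template function and its properties -/

section tmpl
variable {S : SLE Ω}

/-- read coordinate `i` out of a finite vector, `0` if out of range -/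
def coordF (n : ℕ) (x : Fin n → ℝ) (i : ℕ) : ℝ := if h : i < n then x ⟨i, h⟩ else 0

lemma alip_mono {n : ℕ} {φ : (Fin n → ℝ) → ℝ} {C C' : ℝ} (h : ALip φ C) (hCC' : C ≤ C') :
    ALip φ C' := fun x y =>
  le_trans (h x y) (mul_le_mul_of_nonneg_right hCC' dist_nonneg)

lemma alip_congr {n : ℕ} {φ ψ : (Fin n → ℝ) → ℝ} {C : ℝ} (h : ∀ x, φ x = ψ x)
    (hφ : ALip φ C) : ALip ψ C := by
  have : φ = ψ := funext h
  rwa [this] at hφ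

lemma alip_coordF_gk {n : ℕ} (k i : ℕ) :
    ALip (fun x : Fin n → ℝ => gk k (coordF n x i)) (k : ℝ) := by
  by_cases h : i < n
  · refine alip_congr (fun x => ?_) (alip_coord (n := n) k i h)
    rw [coordF, dif_pos h]
  · refine alip_congr (fun x => ?_) (alip_mono (alip_const (n := n) (gk k 0)) (Nat.cast_nonneg k))
    rw [coordF, dif_neg h]

/-- the template `ω ↦ α ∏_{i∈t} gk k (X i ω) + c - ∑_{i∈s} w i (1 - gk k (X i ω))` -/
def tmpl (X : ℕ → Ω → ℝ) (t s : Finset ℕ) (k : ℕ) (w : ℕ → ℝ) (α c : ℝ) : Ω → ℝ :=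
  fun ω => α * ∏ i ∈ t, gk k (X i ω) + c - ∑ i ∈ s, w i * (1 - gk k (X i ω))

/-- the same thing as a function of finitely many coordinates -/
def tmplPhi (n : ℕ) (t s : Finset ℕ) (k : ℕ) (w : ℕ → ℝ) (α c : ℝ) :
    (Fin n → ℝ) → ℝ :=
  fun x => α * ∏ i ∈ t, gk k (coordF n x i) + c - ∑ i ∈ s, w i * (1 - gk k (coordF n x i))

lemma alip_tmplPhi (n : ℕ) (t s : Finset ℕ) (k : ℕ) (w : ℕ → ℝ) (hw : ∀ i, 0 ≤ w i)
    (α c : ℝ) :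
    ALip (tmplPhi n t s k w α c)
      (|α| * ∑ _i ∈ t, (k : ℝ) + ∑ i ∈ s, w i * (0 + (k:ℝ))) := by
  have hprod : ALip (fun x : Fin n → ℝ => ∏ i ∈ t, gk k (coordF n x i))
      (∑ _i ∈ t, (k : ℝ)) :=
    alip_prod t _ _ (fun i _ => alip_coordF_gk k i)
      (fun i _ x => ⟨gk_nonneg _ _, gk_le_one _ _⟩)
  have h1 : ALip (fun x : Fin n → ℝ => α * ∏ i ∈ t, gk k (coordF n x i) + c)
      (|α| * ∑ _i ∈ t, (k : ℝ) + 0) :=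
    alip_add (alip_smul α hprod) (alip_const c)
  have h2 : ALip (fun x : Fin n → ℝ => ∑ i ∈ s, w i * (1 - gk k (coordF n x i)))
      (∑ i ∈ s, w i * (0 + (k:ℝ))) := by
    refine alip_sum s _ _ (fun i _ => ?_)
    have hsub : ALip (fun x : Fin n → ℝ => 1 - gk k (coordF n x i)) (0 + (k:ℝ)) :=
      alip_sub (alip_const 1) (alip_coordF_gk k i)
    have := alip_smul (w i) hsub
    rwa [abs_of_nonneg (hw i)] at this
  have h3 := alip_sub h1 h2
  refine alip_congr (fun x => rfl) (alip_mono h3 (by rw [add_zero]))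

lemma tmpl_eq_comp (X : ℕ → Ω → ℝ) (t s : Finset ℕ) (n : ℕ) (ht : ∀ i ∈ t, i < n)
    (hs : ∀ i ∈ s, i < n) (k : ℕ) (w : ℕ → ℝ) (α c : ℝ) :
    tmpl X t s k w α c = fun ω => tmplPhi n t s k w α c (fun i : Fin n => X i.val ω) := by
  funext ω
  unfold tmpl tmplPhi
  congr 1
  · congr 1
    congr 1
    apply Finset.prod_congr rfl
    intro i hi
    rw [coordF, dif_pos (ht i hi)]
  · apply Finset.sum_congr rfl
    intro i hi
    rw [coordF, dif_pos (hs i hi)]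

lemma tmpl_mem (X : ℕ → Ω → ℝ) (hH : ∀ n, X n ∈ S.H) (t s : Finset ℕ) (n : ℕ)
    (ht : ∀ i ∈ t, i < n) (hs : ∀ i ∈ s, i < n) (k : ℕ) (w : ℕ → ℝ) (hw : ∀ i, 0 ≤ w i)
    (α c : ℝ) : tmpl X t s k w α c ∈ S.H := by
  rw [tmpl_eq_comp X t s n ht hs k w α c]
  exact S.memH_comp _ (alip_tmplPhi n t s k w hw α c) _ (fun i => hH i.val)

lemma tmpl_bdd (X : ℕ → Ω → ℝ) (t s : Finset ℕ) (k : ℕ) (w : ℕ → ℝ) (hw : ∀ i, 0 ≤ w i)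
    (α c : ℝ) : ∀ ω, |tmpl X t s k w α c ω| ≤ |α| + |c| + ∑ i ∈ s, w i := by
  intro ω
  unfold tmpl
  have hp : 0 ≤ ∏ i ∈ t, gk k (X i ω) := Finset.prod_nonneg fun i _ => gk_nonneg _ _
  have hp1 : ∏ i ∈ t, gk k (X i ω) ≤ 1 :=
    Finset.prod_le_one (fun i _ => gk_nonneg _ _) (fun i _ => gk_le_one _ _)
  have h1 : |α * ∏ i ∈ t, gk k (X i ω)| ≤ |α| := by
    rw [abs_mul]
    have : |∏ i ∈ t, gk k (X i ω)| ≤ 1 := abs_le.mpr ⟨by linarith, hp1⟩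
    nlinarith [abs_nonneg α]
  have h2 : |∑ i ∈ s, w i * (1 - gk k (X i ω))| ≤ ∑ i ∈ s, w i := by
    have hnn : 0 ≤ ∑ i ∈ s, w i * (1 - gk k (X i ω)) :=
      Finset.sum_nonneg fun i _ =>
        mul_nonneg (hw i) (by linarith [gk_le_one k (X i ω)])
    have hub : ∑ i ∈ s, w i * (1 - gk k (X i ω)) ≤ ∑ i ∈ s, w i := by
      apply Finset.sum_le_sum
      intro i _
      nlinarith [gk_nonneg k (X i ω), gk_le_one k (X i ω), hw i]
    rw [abs_of_nonneg hnn]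
    exact hub
  calc |α * ∏ i ∈ t, gk k (X i ω) + c - ∑ i ∈ s, w i * (1 - gk k (X i ω))|
      ≤ |α * ∏ i ∈ t, gk k (X i ω) + c| + |∑ i ∈ s, w i * (1 - gk k (X i ω))| := abs_sub _ _
    _ ≤ (|α * ∏ i ∈ t, gk k (X i ω)| + |c|) + ∑ i ∈ s, w i :=
        add_le_add (abs_add_le _ _) h2
    _ ≤ |α| + |c| + ∑ i ∈ s, w i := by linarith

end tmpl

/-! ### the key independence computation -/

section indep
variable {S : SLE Ω}

lemma exists_lip_uncurry {n : ℕ} (φ : (Fin n → ℝ) → (Fin 1 → ℝ) → ℝ) (C₁ C₂ : ℝ)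
    (h1 : 0 ≤ C₁) (h2 : 0 ≤ C₂)
    (hA : ∀ y, ALip (fun x => φ x y) C₁) (hB : ∀ x, ALip (fun y => φ x y) C₂) :
    ∃ K : NNReal, LipschitzWith K (Function.uncurry φ) := by
  refine ⟨(C₁ + C₂).toNNReal, LipschitzWith.of_dist_le_mul fun p q => ?_⟩
  have hd : dist (Function.uncurry φ p) (Function.uncurry φ q) = |φ p.1 p.2 - φ q.1 q.2| :=
    Real.dist_eq _ _
  have ht : |φ p.1 p.2 - φ q.1 q.2| ≤ C₁ * dist p.1 q.1 + C₂ * dist p.2 q.2 := by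
    calc |φ p.1 p.2 - φ q.1 q.2|
        = |(φ p.1 p.2 - φ q.1 p.2) + (φ q.1 p.2 - φ q.1 q.2)| := by ring_nf
      _ ≤ |φ p.1 p.2 - φ q.1 p.2| + |φ q.1 p.2 - φ q.1 q.2| := abs_add_le _ _
      _ ≤ C₁ * dist p.1 q.1 + C₂ * dist p.2 q.2 :=
          add_le_add (hA p.2 p.1 q.1) (hB q.1 p.2 q.2)
  have hc : ((C₁ + C₂).toNNReal : ℝ) = C₁ + C₂ := Real.coe_toNNReal _ (by positivity)
  rw [hd, hc, Prod.dist_eq]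
  have hm1 : dist p.1 q.1 ≤ max (dist p.1 q.1) (dist p.2 q.2) := le_max_left _ _
  have hm2 : dist p.2 q.2 ≤ max (dist p.1 q.1) (dist p.2 q.2) := le_max_right _ _
  have hnn : (0:ℝ) ≤ max (dist p.1 q.1) (dist p.2 q.2) :=
    le_trans dist_nonneg hm1
  calc |φ p.1 p.2 - φ q.1 q.2| ≤ C₁ * dist p.1 q.1 + C₂ * dist p.2 q.2 := ht
    _ ≤ (C₁ + C₂) * (max (dist p.1 q.1) (dist p.2 q.2)) := by nlinarith
    _ = (C₁ + C₂) * (dist p.1 q.1 ⊔ dist p.2 q.2) := rfl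

lemma abs_combo_le {α c P Q Ssum : ℝ} (hα : 0 ≤ α) (hP : 0 ≤ P) (hP1 : P ≤ 1)
    (hQ : 0 ≤ Q) (hQle : Q ≤ Ssum) : |α * P + c - Q| ≤ α + |c| + Ssum := by
  have h1 : 0 ≤ α * P := mul_nonneg hα hP
  have h2 : α * P ≤ α := by nlinarith
  rw [abs_le]
  constructor
  · have := neg_abs_le c; nlinarith
  · have := le_abs_self c; nlinarith

lemma mem_gkX (X : ℕ → Ω → ℝ) (hH : ∀ n, X n ∈ S.H) (k i : ℕ) :
    (fun ω => gk k (X i ω)) ∈ S.H := by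
  have h : ALip (n := 1) (fun x => gk k (x 0)) (k : ℝ) := alip_coord k 0 Nat.one_pos
  exact S.memH_comp (n := 1) _ h (fun _ => X i) (fun _ => hH i)

lemma gkX_bdd (X : ℕ → Ω → ℝ) (k i : ℕ) : ∀ ω, |gk k (X i ω)| ≤ 1 := fun ω =>
  abs_le.mpr ⟨by linarith [gk_nonneg k (X i ω)], gk_le_one _ _⟩

lemma eE_nonneg (X : ℕ → Ω → ℝ) (hH : ∀ n, X n ∈ S.H) (k i : ℕ) :
    0 ≤ S.E (fun ω => gk k (X i ω)) :=
  S.const_le_E (mem_gkX X hH k i) (fun ω => gk_nonneg _ _)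

lemma eE_le_one (X : ℕ → Ω → ℝ) (hH : ∀ n, X n ∈ S.H) (k i : ℕ) :
    S.E (fun ω => gk k (X i ω)) ≤ 1 :=
  S.E_le_const (mem_gkX X hH k i) (fun ω => gk_le_one _ _)

/-- Key lemma: iterated independence computes the expectation of the template. -/
lemma E_tmpl (X : ℕ → Ω → ℝ) (hH : ∀ n, X n ∈ S.H) (hind : IndepSeq S X)
    (k : ℕ) (w : ℕ → ℝ) (hw : ∀ i, 0 ≤ w i) :
    ∀ (N : ℕ) (t s : Finset ℕ), t.card + s.card = N →
      (∀ i ∈ s, ∀ j ∈ t, i < j) → (∀ i ∈ t, 1 ≤ i) → (∀ i ∈ s, 1 ≤ i) →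
      ∀ α : ℝ, 0 ≤ α → ∀ c : ℝ,
      S.E (tmpl X t s k w α c)
        = α * ∏ i ∈ t, S.E (fun ω => gk k (X i ω)) + c
          - ∑ i ∈ s, w i * (1 - S.E (fun ω => gk k (X i ω))) := by
  intro N
  induction N with
  | zero =>
      intro t s hcard hst ht1 hs1 α hα c
      have ht : t = ∅ := Finset.card_eq_zero.mp (by omega)
      have hs : s = ∅ := Finset.card_eq_zero.mp (by omega)
      subst ht; subst hs
      have hconst : tmpl X ∅ ∅ k w α c = fun _ => α + c := by
        funext ω; rw [tmpl]; simp
      rw [hconst, S.isConst]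
      simp
  | succ N ih =>
      intro t s hcard hst ht1 hs1 α hα c
      by_cases htne : t.Nonempty
      · -- peel the largest element of t
        set b := t.max' htne with hbdef
        have hbt : b ∈ t := t.max'_mem htne
        have hb1 : 1 ≤ b := ht1 b hbt
        have hblt : ∀ i ∈ t.erase b, i < b := fun i hi =>
          lt_of_le_of_ne (t.le_max' i (Finset.mem_of_mem_erase hi)) (Finset.ne_of_mem_erase hi)
        have hslt : ∀ i ∈ s, i < b := fun i hi => hst i hi b hbt
        obtain ⟨b', hb'⟩ : ∃ b', b' + 1 = b := ⟨b - 1, Nat.succ_pred_eq_of_pos hb1⟩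
        set eb := S.E (fun ω => gk k (X b ω)) with hebdef
        have heb0 : 0 ≤ eb := eE_nonneg X hH k b
        set φ : (Fin (b' + 1) → ℝ) → (Fin 1 → ℝ) → ℝ := fun x y =>
          α * ((∏ i ∈ t.erase b, gk k (coordF (b' + 1) x i)) * gk k (y 0)) + c
            - ∑ i ∈ s, w i * (1 - gk k (coordF (b' + 1) x i)) with hφdef
        have hlip : ∃ K : NNReal, LipschitzWith K (Function.uncurry φ) := by
          apply exists_lip_uncurry φ
            (α * ∑ _i ∈ t.erase b, (k:ℝ) + ∑ i ∈ s, w i * (0 + (k:ℝ))) (α * k)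
          · have : (0:ℝ) ≤ ∑ i ∈ s, w i * (0 + (k:ℝ)) :=
              Finset.sum_nonneg fun i _ => mul_nonneg (hw i) (by positivity)
            have h2 : (0:ℝ) ≤ α * ∑ _i ∈ t.erase b, (k:ℝ) :=
              mul_nonneg hα (Finset.sum_nonneg fun i _ => Nat.cast_nonneg _)
            linarith
          · positivity
          · intro y
            have hprod : ALip (fun x : Fin (b'+1) → ℝ =>
                ∏ i ∈ t.erase b, gk k (coordF (b'+1) x i)) (∑ _i ∈ t.erase b, (k : ℝ)) :=
              alip_prod _ _ _ (fun i _ => alip_coordF_gk k i)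
                (fun i _ x => ⟨gk_nonneg _ _, gk_le_one _ _⟩)
            have h1 : ALip (fun x : Fin (b'+1) → ℝ =>
                (α * gk k (y 0)) * ∏ i ∈ t.erase b, gk k (coordF (b'+1) x i) + c)
                (|α * gk k (y 0)| * ∑ _i ∈ t.erase b, (k : ℝ) + 0) :=
              alip_add (alip_smul _ hprod) (alip_const c)
            have h2 : ALip (fun x : Fin (b'+1) → ℝ =>
                ∑ i ∈ s, w i * (1 - gk k (coordF (b'+1) x i)))
                (∑ i ∈ s, w i * (0 + (k:ℝ))) := by
              refine alip_sum s _ _ (fun i _ => ?_)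
              have hsub : ALip (fun x : Fin (b'+1) → ℝ => 1 - gk k (coordF (b'+1) x i))
                  (0 + (k:ℝ)) := alip_sub (alip_const 1) (alip_coordF_gk k i)
              have := alip_smul (w i) hsub
              rwa [abs_of_nonneg (hw i)] at this
            have h3 := alip_sub h1 h2
            have h4 : |α * gk k (y 0)| * ∑ _i ∈ t.erase b, (k : ℝ) + 0 + ∑ i ∈ s, w i * (0 + (k:ℝ))
                ≤ α * ∑ _i ∈ t.erase b, (k:ℝ) + ∑ i ∈ s, w i * (0 + (k:ℝ)) := by
              have hg : |α * gk k (y 0)| ≤ α := by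
                rw [abs_mul, abs_of_nonneg hα]
                have := abs_le.mpr ⟨by linarith [gk_nonneg k (y 0)], gk_le_one k (y 0)⟩
                nlinarith
              have hk0 : (0:ℝ) ≤ ∑ _i ∈ t.erase b, (k:ℝ) :=
                Finset.sum_nonneg fun i _ => Nat.cast_nonneg _
              nlinarith [abs_nonneg (α * gk k (y 0))]
            refine alip_congr (fun x => ?_) (alip_mono h3 h4)
            show (α * gk k (y 0)) * ∏ i ∈ t.erase b, gk k (coordF (b'+1) x i) + c
                - ∑ i ∈ s, w i * (1 - gk k (coordF (b'+1) x i)) = φ x y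
            rw [hφdef]; ring
          · intro x
            intro y y'
            have hP : 0 ≤ ∏ i ∈ t.erase b, gk k (coordF (b'+1) x i) :=
              Finset.prod_nonneg fun i _ => gk_nonneg _ _
            have hP1 : ∏ i ∈ t.erase b, gk k (coordF (b'+1) x i) ≤ 1 :=
              Finset.prod_le_one (fun i _ => gk_nonneg _ _) (fun i _ => gk_le_one _ _)
            have hdiff : φ x y - φ x y'
                = α * (∏ i ∈ t.erase b, gk k (coordF (b'+1) x i)) * (gk k (y 0) - gk k (y' 0)) := by
              rw [hφdef]; ring
            have hlipg : |gk k (y 0) - gk k (y' 0)| ≤ (k:ℝ) * dist y y' := by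
              calc |gk k (y 0) - gk k (y' 0)| ≤ (k:ℝ) * |y 0 - y' 0| := gk_lip _ _ _
                _ ≤ (k:ℝ) * dist y y' := by
                    rw [show |y 0 - y' 0| = dist (y 0) (y' 0) from (Real.dist_eq _ _).symm]
                    exact mul_le_mul_of_nonneg_left (dist_le_pi_dist y y' 0) (Nat.cast_nonneg _)
            calc |φ x y - φ x y'|
                = α * (∏ i ∈ t.erase b, gk k (coordF (b'+1) x i)) * |gk k (y 0) - gk k (y' 0)| := by
                  rw [hdiff, abs_mul, abs_mul, abs_of_nonneg hα, abs_of_nonneg hP]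
              _ ≤ α * (k:ℝ) * dist y y' := by
                  have s1 : α * (∏ i ∈ t.erase b, gk k (coordF (b'+1) x i))
                      * |gk k (y 0) - gk k (y' 0)| ≤ α * |gk k (y 0) - gk k (y' 0)| := by
                    nlinarith [abs_nonneg (gk k (y 0) - gk k (y' 0)),
                      mul_nonneg (mul_nonneg hα (abs_nonneg (gk k (y 0) - gk k (y' 0)))) (sub_nonneg.mpr hP1)]
                  have s2 : α * |gk k (y 0) - gk k (y' 0)| ≤ α * ((k:ℝ) * dist y y') :=
                    mul_le_mul_of_nonneg_left hlipg hα
                  nlinarith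
        have hbdd : ∃ M : ℝ, ∀ x y, |φ x y| ≤ M := by
          refine ⟨α + |c| + ∑ i ∈ s, w i, fun x y => ?_⟩
          rw [hφdef]
          apply abs_combo_le hα
          · exact mul_nonneg (Finset.prod_nonneg fun i _ => gk_nonneg _ _) (gk_nonneg _ _)
          · have h1 : ∏ i ∈ t.erase b, gk k (coordF (b'+1) x i) ≤ 1 :=
              Finset.prod_le_one (fun i _ => gk_nonneg _ _) (fun i _ => gk_le_one _ _)
            have h2 : 0 ≤ ∏ i ∈ t.erase b, gk k (coordF (b'+1) x i) :=
              Finset.prod_nonneg fun i _ => gk_nonneg _ _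
            nlinarith [gk_nonneg k (y 0), gk_le_one k (y 0)]
          · exact Finset.sum_nonneg fun i _ =>
              mul_nonneg (hw i) (by linarith [gk_le_one k (coordF (b'+1) x i)])
          · exact Finset.sum_le_sum fun i _ => by
              nlinarith [gk_nonneg k (coordF (b'+1) x i), gk_le_one k (coordF (b'+1) x i), hw i]
        have key := hind b' φ hlip hbdd
        have hLHS : tmpl X t s k w α c
            = fun ω => φ (fun i : Fin (b' + 1) => X i.val ω) (fun _ : Fin 1 => X (b' + 1) ω) := by
          funext ω
          rw [hφdef]
          show α * ∏ i ∈ t, gk k (X i ω) + c - ∑ i ∈ s, w i * (1 - gk k (X i ω))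
              = α * ((∏ i ∈ t.erase b, gk k (coordF (b'+1) (fun i : Fin (b'+1) => X i.val ω) i))
                  * gk k (X (b' + 1) ω)) + c
                - ∑ i ∈ s, w i * (1 - gk k (coordF (b'+1) (fun i : Fin (b'+1) => X i.val ω) i))
          have hco : ∀ i : ℕ, i < b' + 1 →
              coordF (b'+1) (fun i : Fin (b'+1) => X i.val ω) i = X i ω := by
            intro i hi
            rw [coordF, dif_pos hi]
          have hprodeq : ∏ i ∈ t.erase b, gk k (coordF (b'+1) (fun i : Fin (b'+1) => X i.val ω) i)
              = ∏ i ∈ t.erase b, gk k (X i ω) :=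
            Finset.prod_congr rfl fun i hi => by rw [hco i (by rw [hb']; exact hblt i hi)]
          have hsumeq : ∑ i ∈ s, w i * (1 - gk k (coordF (b'+1) (fun i : Fin (b'+1) => X i.val ω) i))
              = ∑ i ∈ s, w i * (1 - gk k (X i ω)) :=
            Finset.sum_congr rfl fun i hi => by rw [hco i (by rw [hb']; exact hslt i hi)]
          rw [hprodeq, hsumeq, hb']
          rw [← Finset.mul_prod_erase t _ hbt]
          ring
        have hinner : (fun ω => S.E (fun ω' => φ (fun i : Fin (b' + 1) => X i.val ω)
              (fun _ : Fin 1 => X (b' + 1) ω')))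
            = tmpl X (t.erase b) s k w (α * eb) c := by
          funext ω
          have hco : ∀ i : ℕ, i < b' + 1 →
              coordF (b'+1) (fun i : Fin (b'+1) => X i.val ω) i = X i ω := by
            intro i hi; rw [coordF, dif_pos hi]
          set β := α * ∏ i ∈ t.erase b, gk k (coordF (b'+1) (fun i : Fin (b'+1) => X i.val ω) i)
            with hβdef
          have hβ0 : 0 ≤ β :=
            mul_nonneg hα (Finset.prod_nonneg fun i _ => gk_nonneg _ _)
          set C := c - ∑ i ∈ s, w i *
              (1 - gk k (coordF (b'+1) (fun i : Fin (b'+1) => X i.val ω) i)) with hCdef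
          have hfeq : (fun ω' => φ (fun i : Fin (b' + 1) => X i.val ω)
                (fun _ : Fin 1 => X (b' + 1) ω'))
              = fun ω' => β * gk k (X b ω') + C := by
            funext ω'
            rw [hφdef, hβdef, hCdef, hb']
            ring
          rw [hfeq]
          have hZ : (fun ω' => β * gk k (X b ω')) ∈ S.H := by
            have := S.memH_affine (mem_gkX X hH k b) β 0
            simpa using this
          have h1 : S.E (fun ω' => β * gk k (X b ω') + C)
              = S.E (fun ω' => β * gk k (X b ω')) + C := S.E_add_const hZ C
          have h2 : S.E (fun ω' => β * gk k (X b ω')) = β * eb :=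
            S.E_smul (mem_gkX X hH k b) hβ0
          rw [h1, h2]
          show β * eb + C = tmpl X (t.erase b) s k w (α * eb) c ω
          rw [tmpl, hβdef, hCdef]
          have hprodeq : ∏ i ∈ t.erase b, gk k (coordF (b'+1) (fun i : Fin (b'+1) => X i.val ω) i)
              = ∏ i ∈ t.erase b, gk k (X i ω) :=
            Finset.prod_congr rfl fun i hi => by rw [hco i (by rw [hb']; exact hblt i hi)]
          have hsumeq : ∑ i ∈ s, w i * (1 - gk k (coordF (b'+1) (fun i : Fin (b'+1) => X i.val ω) i))
              = ∑ i ∈ s, w i * (1 - gk k (X i ω)) :=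
            Finset.sum_congr rfl fun i hi => by rw [hco i (by rw [hb']; exact hslt i hi)]
          rw [hprodeq, hsumeq]
          ring
        have hcard' : (t.erase b).card + s.card = N := by
          rw [Finset.card_erase_of_mem hbt]
          have : 1 ≤ t.card := Finset.card_pos.mpr htne
          omega
        have hih := ih (t.erase b) s hcard'
          (fun i hi j hj => hst i hi j (Finset.mem_of_mem_erase hj))
          (fun i hi => ht1 i (Finset.mem_of_mem_erase hi)) hs1
          (α * eb) (mul_nonneg hα heb0) c
        rw [hLHS, key, hinner, hih]
        rw [← Finset.mul_prod_erase t _ hbt]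
        ring
      · -- t is empty : peel the largest element of s
        have ht : t = ∅ := Finset.not_nonempty_iff_eq_empty.mp htne
        subst ht
        have hsne : s.Nonempty := by
          rw [← Finset.card_pos]
          simp only [Finset.card_empty] at hcard
          omega
        set b := s.max' hsne with hbdef
        have hbs : b ∈ s := s.max'_mem hsne
        have hb1 : 1 ≤ b := hs1 b hbs
        have hblt : ∀ i ∈ s.erase b, i < b := fun i hi =>
          lt_of_le_of_ne (s.le_max' i (Finset.mem_of_mem_erase hi)) (Finset.ne_of_mem_erase hi)
        obtain ⟨b', hb'⟩ : ∃ b', b' + 1 = b := ⟨b - 1, Nat.succ_pred_eq_of_pos hb1⟩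
        set eb := S.E (fun ω => gk k (X b ω)) with hebdef
        set φ : (Fin (b' + 1) → ℝ) → (Fin 1 → ℝ) → ℝ := fun x y =>
          α * (1:ℝ) + c - (∑ i ∈ s.erase b, w i * (1 - gk k (coordF (b' + 1) x i))
            + w b * (1 - gk k (y 0))) with hφdef
        have hlip : ∃ K : NNReal, LipschitzWith K (Function.uncurry φ) := by
          apply exists_lip_uncurry φ (∑ i ∈ s.erase b, w i * (0 + (k:ℝ))) (w b * k)
          · exact Finset.sum_nonneg fun i _ => mul_nonneg (hw i) (by positivity)
          · exact mul_nonneg (hw b) (Nat.cast_nonneg _)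
          · intro y
            have h2 : ALip (fun x : Fin (b'+1) → ℝ =>
                ∑ i ∈ s.erase b, w i * (1 - gk k (coordF (b'+1) x i)))
                (∑ i ∈ s.erase b, w i * (0 + (k:ℝ))) := by
              refine alip_sum _ _ _ (fun i _ => ?_)
              have hsub : ALip (fun x : Fin (b'+1) → ℝ => 1 - gk k (coordF (b'+1) x i))
                  (0 + (k:ℝ)) := alip_sub (alip_const 1) (alip_coordF_gk k i)
              have := alip_smul (w i) hsub
              rwa [abs_of_nonneg (hw i)] at this
            have h1 : ALip (fun _x : Fin (b'+1) → ℝ =>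
                α * (1:ℝ) + c - w b * (1 - gk k (y 0))) 0 :=
              alip_const _
            have h3 := alip_sub h1 h2
            refine alip_congr (fun x => ?_) (alip_mono h3 (by linarith))
            show α * (1:ℝ) + c - w b * (1 - gk k (y 0))
                - ∑ i ∈ s.erase b, w i * (1 - gk k (coordF (b'+1) x i)) = φ x y
            rw [hφdef]; ring
          · intro x
            intro y y'
            have hdiff : φ x y - φ x y' = w b * (gk k (y 0) - gk k (y' 0)) := by
              rw [hφdef]; ring
            have hlipg : |gk k (y 0) - gk k (y' 0)| ≤ (k:ℝ) * dist y y' := by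
              calc |gk k (y 0) - gk k (y' 0)| ≤ (k:ℝ) * |y 0 - y' 0| := gk_lip _ _ _
                _ ≤ (k:ℝ) * dist y y' := by
                    rw [show |y 0 - y' 0| = dist (y 0) (y' 0) from (Real.dist_eq _ _).symm]
                    exact mul_le_mul_of_nonneg_left (dist_le_pi_dist y y' 0) (Nat.cast_nonneg _)
            calc |φ x y - φ x y'| = w b * |gk k (y 0) - gk k (y' 0)| := by
                  rw [hdiff, abs_mul, abs_of_nonneg (hw b)]
              _ ≤ w b * ((k:ℝ) * dist y y') := mul_le_mul_of_nonneg_left hlipg (hw b)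
              _ = w b * k * dist y y' := by ring
        have hbdd : ∃ M : ℝ, ∀ x y, |φ x y| ≤ M := by
          refine ⟨α + |c| + ∑ i ∈ s, w i, fun x y => ?_⟩
          rw [hφdef]
          have hsplit : ∑ i ∈ s, w i
              = w b * (1:ℝ) + ∑ i ∈ s.erase b, w i * (1:ℝ) := by
            simp only [mul_one]
            exact (Finset.add_sum_erase s _ hbs).symm
          have := abs_combo_le (α := α) (c := c)
            (P := (1:ℝ))
            (Q := ∑ i ∈ s.erase b, w i * (1 - gk k (coordF (b'+1) x i)) + w b * (1 - gk k (y 0)))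
            (Ssum := ∑ i ∈ s, w i) hα zero_le_one le_rfl ?_ ?_
          · exact this
          · have h1 : 0 ≤ ∑ i ∈ s.erase b, w i * (1 - gk k (coordF (b'+1) x i)) :=
              Finset.sum_nonneg fun i _ =>
                mul_nonneg (hw i) (by linarith [gk_le_one k (coordF (b'+1) x i)])
            have h2 : 0 ≤ w b * (1 - gk k (y 0)) :=
              mul_nonneg (hw b) (by linarith [gk_le_one k (y 0)])
            linarith
          · have h1 : ∑ i ∈ s.erase b, w i * (1 - gk k (coordF (b'+1) x i))
                ≤ ∑ i ∈ s.erase b, w i * (1:ℝ) :=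
              Finset.sum_le_sum fun i _ => by
                nlinarith [gk_nonneg k (coordF (b'+1) x i), hw i]
            have h2 : w b * (1 - gk k (y 0)) ≤ w b * (1:ℝ) := by
              nlinarith [gk_nonneg k (y 0), hw b]
            rw [hsplit]
            linarith
        have key := hind b' φ hlip hbdd
        have hLHS : tmpl X ∅ s k w α c
            = fun ω => φ (fun i : Fin (b' + 1) => X i.val ω) (fun _ : Fin 1 => X (b' + 1) ω) := by
          funext ω
          rw [hφdef]
          show α * ∏ i ∈ (∅ : Finset ℕ), gk k (X i ω) + c - ∑ i ∈ s, w i * (1 - gk k (X i ω))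
              = α * (1:ℝ) + c
                - (∑ i ∈ s.erase b, w i *
                    (1 - gk k (coordF (b'+1) (fun i : Fin (b'+1) => X i.val ω) i))
                  + w b * (1 - gk k (X (b' + 1) ω)))
          have hco : ∀ i : ℕ, i < b' + 1 →
              coordF (b'+1) (fun i : Fin (b'+1) => X i.val ω) i = X i ω := by
            intro i hi; rw [coordF, dif_pos hi]
          have hsumeq : ∑ i ∈ s.erase b, w i *
              (1 - gk k (coordF (b'+1) (fun i : Fin (b'+1) => X i.val ω) i))
              = ∑ i ∈ s.erase b, w i * (1 - gk k (X i ω)) :=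
            Finset.sum_congr rfl fun i hi => by rw [hco i (by rw [hb']; exact hblt i hi)]
          rw [hsumeq, hb', Finset.prod_empty]
          rw [← Finset.add_sum_erase s _ hbs]
          ring
        have hinner : (fun ω => S.E (fun ω' => φ (fun i : Fin (b' + 1) => X i.val ω)
              (fun _ : Fin 1 => X (b' + 1) ω')))
            = tmpl X ∅ (s.erase b) k w α (c - w b * (1 - eb)) := by
          funext ω
          have hco : ∀ i : ℕ, i < b' + 1 →
              coordF (b'+1) (fun i : Fin (b'+1) => X i.val ω) i = X i ω := by
            intro i hi; rw [coordF, dif_pos hi]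
          set C := α * (1:ℝ) + c - w b
            - ∑ i ∈ s.erase b, w i *
              (1 - gk k (coordF (b'+1) (fun i : Fin (b'+1) => X i.val ω) i)) with hCdef
          have hfeq : (fun ω' => φ (fun i : Fin (b' + 1) => X i.val ω)
                (fun _ : Fin 1 => X (b' + 1) ω'))
              = fun ω' => w b * gk k (X b ω') + C := by
            funext ω'
            rw [hφdef, hCdef, hb']
            ring
          rw [hfeq]
          have hZ : (fun ω' => w b * gk k (X b ω')) ∈ S.H := by
            have := S.memH_affine (mem_gkX X hH k b) (w b) 0
            simpa using this
          have h1 : S.E (fun ω' => w b * gk k (X b ω') + C)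
              = S.E (fun ω' => w b * gk k (X b ω')) + C := S.E_add_const hZ C
          have h2 : S.E (fun ω' => w b * gk k (X b ω')) = w b * eb :=
            S.E_smul (mem_gkX X hH k b) (hw b)
          rw [h1, h2]
          show w b * eb + C = tmpl X ∅ (s.erase b) k w α (c - w b * (1 - eb)) ω
          rw [tmpl, hCdef, Finset.prod_empty]
          have hsumeq : ∑ i ∈ s.erase b, w i *
              (1 - gk k (coordF (b'+1) (fun i : Fin (b'+1) => X i.val ω) i))
              = ∑ i ∈ s.erase b, w i * (1 - gk k (X i ω)) :=
            Finset.sum_congr rfl fun i hi => by rw [hco i (by rw [hb']; exact hblt i hi)]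
          rw [hsumeq]
          ring
        have hcard' : (∅ : Finset ℕ).card + (s.erase b).card = N := by
          rw [Finset.card_erase_of_mem hbs]
          simp only [Finset.card_empty] at hcard ⊢
          have : 1 ≤ s.card := Finset.card_pos.mpr hsne
          omega
        have hih := ih ∅ (s.erase b) hcard'
          (fun i hi j hj => absurd hj (Finset.notMem_empty j))
          (fun i hi => absurd hi (Finset.notMem_empty i))
          (fun i hi => hs1 i (Finset.mem_of_mem_erase hi))
          α hα (c - w b * (1 - eb))
        rw [hLHS, key, hinner, hih]
        rw [← Finset.add_sum_erase s _ hbs]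
        ring

end indep

/-! ### elementary product estimates -/

section arith

lemma one_sub_prod_le_sum (s : Finset ℕ) (u : ℕ → ℝ) (h : ∀ i ∈ s, 0 ≤ u i ∧ u i ≤ 1) :
    1 - ∏ i ∈ s, u i ≤ ∑ i ∈ s, (1 - u i) := by
  classical
  induction s using Finset.induction_on with
  | empty => simp
  | @insert a s' hni ih =>
      rw [Finset.prod_insert hni, Finset.sum_insert hni]
      have ha := h a (Finset.mem_insert_self _ _)
      have hrec := ih (fun i hi => h i (Finset.mem_insert_of_mem hi))
      have hp0 : 0 ≤ ∏ i ∈ s', u i :=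
        Finset.prod_nonneg fun i hi => (h i (Finset.mem_insert_of_mem hi)).1
      have hp1 : ∏ i ∈ s', u i ≤ 1 :=
        Finset.prod_le_one (fun i hi => (h i (Finset.mem_insert_of_mem hi)).1)
          (fun i hi => (h i (Finset.mem_insert_of_mem hi)).2)
      nlinarith

lemma prod_ge_one_sub_sum (s : Finset ℕ) (e v : ℕ → ℝ)
    (h : ∀ i ∈ s, 1 - v i ≤ e i ∧ 0 ≤ e i ∧ 0 ≤ v i ∧ e i ≤ 1) :
    1 - ∑ i ∈ s, v i ≤ ∏ i ∈ s, e i := by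
  classical
  induction s using Finset.induction_on with
  | empty => simp
  | @insert a s' hni ih =>
      rw [Finset.prod_insert hni, Finset.sum_insert hni]
      have ha := h a (Finset.mem_insert_self _ _)
      have hrec := ih (fun i hi => h i (Finset.mem_insert_of_mem hi))
      have hp0 : 0 ≤ ∏ i ∈ s', e i :=
        Finset.prod_nonneg fun i hi => (h i (Finset.mem_insert_of_mem hi)).2.1
      have hsv : 0 ≤ ∑ i ∈ s', v i :=
        Finset.sum_nonneg fun i hi => (h i (Finset.mem_insert_of_mem hi)).2.2.1
      rcases le_total 0 (1 - ∑ i ∈ s', v i) with hc | hc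
      · nlinarith
      · nlinarith

lemma prod_le_single_mem (s : Finset ℕ) (u : ℕ → ℝ) (h : ∀ i ∈ s, 0 ≤ u i ∧ u i ≤ 1)
    {i : ℕ} (hi : i ∈ s) : ∏ j ∈ s, u j ≤ u i := by
  classical
  rw [← Finset.mul_prod_erase s u hi]
  have h1 : ∏ j ∈ s.erase i, u j ≤ 1 :=
    Finset.prod_le_one (fun j hj => (h j (Finset.mem_of_mem_erase hj)).1)
      (fun j hj => (h j (Finset.mem_of_mem_erase hj)).2)
  have h2 : 0 ≤ ∏ j ∈ s.erase i, u j :=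
    Finset.prod_nonneg fun j hj => (h j (Finset.mem_of_mem_erase hj)).1
  nlinarith [(h i hi).1]

lemma prod_subset_le (s s' : Finset ℕ) (u : ℕ → ℝ) (hss : s ⊆ s')
    (h : ∀ i ∈ s', 0 ≤ u i ∧ u i ≤ 1) : ∏ i ∈ s', u i ≤ ∏ i ∈ s, u i := by
  classical
  rw [← Finset.prod_sdiff hss]
  have h1 : ∏ i ∈ s' \ s, u i ≤ 1 :=
    Finset.prod_le_one (fun i hi => (h i (Finset.mem_sdiff.mp hi).1).1)
      (fun i hi => (h i (Finset.mem_sdiff.mp hi).1).2)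
  have h2 : 0 ≤ ∏ i ∈ s' \ s, u i :=
    Finset.prod_nonneg fun i hi => (h i (Finset.mem_sdiff.mp hi).1).1
  have h3 : 0 ≤ ∏ i ∈ s, u i := Finset.prod_nonneg fun i hi => (h i (hss hi)).1
  nlinarith

/-- `∏_B u ≥ ∏_A u - ∑_{B\A} (1-u)` for `A ⊆ B`, `u ∈ [0,1]`. -/
lemma prod_ge_prod_sub_sum (A B : Finset ℕ) (u : ℕ → ℝ) (hAB : A ⊆ B)
    (h : ∀ i ∈ B, 0 ≤ u i ∧ u i ≤ 1) :
    ∏ i ∈ A, u i - ∑ i ∈ B \ A, (1 - u i) ≤ ∏ i ∈ B, u i := by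
  classical
  rw [← Finset.prod_sdiff hAB]
  have h1 : 1 - ∏ i ∈ B \ A, u i ≤ ∑ i ∈ B \ A, (1 - u i) :=
    one_sub_prod_le_sum _ _ (fun i hi => h i (Finset.mem_sdiff.mp hi).1)
  have hA0 : 0 ≤ ∏ i ∈ A, u i := Finset.prod_nonneg fun i hi => (h i (hAB hi)).1
  have hA1 : ∏ i ∈ A, u i ≤ 1 :=
    Finset.prod_le_one (fun i hi => (h i (hAB hi)).1) (fun i hi => (h i (hAB hi)).2)
  have hB0 : 0 ≤ ∏ i ∈ B \ A, u i :=
    Finset.prod_nonneg fun i hi => (h i (Finset.mem_sdiff.mp hi).1).1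
  have hB1 : ∏ i ∈ B \ A, u i ≤ 1 :=
    Finset.prod_le_one (fun i hi => (h i (Finset.mem_sdiff.mp hi).1).1)
      (fun i hi => (h i (Finset.mem_sdiff.mp hi).1).2)
  nlinarith

end arith

/-! ### further helpers -/

section helpers

lemma alip_lipschitzWith {n : ℕ} {φ : (Fin n → ℝ) → ℝ} {C : ℝ} (hC : 0 ≤ C)
    (h : ALip φ C) : ∃ K : NNReal, LipschitzWith K φ := by
  refine ⟨C.toNNReal, LipschitzWith.of_dist_le_mul fun x y => ?_⟩
  rw [Real.dist_eq, Real.coe_toNNReal _ hC]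
  exact h x y

variable [MeasurableSpace Ω] {S : SLE Ω} {P : Set (Measure Ω)}

/-- near-optimizer selection (needs positivity to beat the `p ∉ P` junk zeros). -/
lemma exists_near_sup (hCC : CC S P) {Z : Ω → ℝ} (hZ : Z ∈ S.H) {c : ℝ}
    (hb : ∀ ω, |Z ω| ≤ c) {ε : ℝ} (hε : 0 < ε) (hpos : 0 ≤ S.E Z - ε) :
    ∃ p ∈ P, S.E Z - ε ≤ ∫ ω, Z ω ∂p := by
  by_contra hcon
  push_neg at hcon
  have hrep := hCC.2.2.1 Z hZ ⟨c, hb⟩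
  have hle : (⨆ p, ⨆ _ : p ∈ P, ∫ ω, Z ω ∂p) ≤ S.E Z - ε := by
    apply Real.iSup_le _ hpos
    intro p
    by_cases hp : p ∈ P
    · rw [ciSup_pos hp]
      exact le_of_lt (hcon p hp)
    · haveI : IsEmpty (p ∈ P) := ⟨hp⟩
      rw [Real.iSup_of_isEmpty]
      exact hpos
  rw [← hrep] at hle
  linarith

/-- the clip to `[0,2]` -/
def cl2 (x : ℝ) : ℝ := max 0 (min x 2)

lemma cl2_lip (x y : ℝ) : |cl2 x - cl2 y| ≤ |x - y| := by
  unfold cl2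
  calc |max 0 (min x 2) - max 0 (min y 2)| ≤ max |(0:ℝ) - 0| |min x 2 - min y 2| :=
        abs_max_sub_max_le_max _ _ _ _
    _ ≤ max |(0:ℝ) - 0| (max |x - y| |(2:ℝ) - 2|) :=
        max_le_max le_rfl (abs_min_sub_min_le_max _ _ _ _)
    _ ≤ |x - y| := by
        simp only [sub_self, abs_zero]
        exact max_le (abs_nonneg _) (max_le le_rfl (abs_nonneg _))

lemma cl2_bdd (x : ℝ) : |cl2 x| ≤ 2 := by
  unfold cl2
  rw [abs_le]
  constructor
  · have : (0:ℝ) ≤ max 0 (min x 2) := le_max_left _ _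
    linarith
  · apply max_le (by norm_num)
    exact le_trans (min_le_right _ _) le_rfl

lemma gk_cl2 {k : ℕ} (hk : 1 ≤ k) (x : ℝ) : gk k (cl2 x) = gk k x := by
  unfold cl2
  rcases le_total x 0 with hx | hx
  · have h1 : min x 2 ≤ 0 := le_trans (min_le_left _ _) hx
    rw [max_eq_left h1]
    -- both are 0
    have hz : ∀ z : ℝ, z ≤ 0 → gk k z = 0 := by
      intro z hz
      unfold gk
      have h2 : (k:ℝ) * (z - 1) + 1 ≤ 0 := by
        have hk1 : (1:ℝ) ≤ (k:ℝ) := by exact_mod_cast hk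
        nlinarith
      rw [max_eq_left h2]
      exact min_eq_right (by norm_num)
    rw [hz x hx, hz 0 le_rfl]
  · rcases le_total x 2 with hx2 | hx2
    · rw [min_eq_left hx2, max_eq_right hx]
    · rw [min_eq_right hx2, max_eq_right (by norm_num)]
      rw [gk_of_one_le k (by norm_num), gk_of_one_le k (by linarith)]

lemma sum_Ico_le_tsum_tail (f : ℕ → ℝ) (hf : ∀ i, 0 ≤ f i) (hs : Summable f) (m N : ℕ) :
    ∑ i ∈ Finset.Ico m N, f i ≤ ∑' i, f (i + m) := by
  rw [Finset.sum_Ico_eq_sum_range]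
  have hs' : Summable (fun i => f (i + m)) := (summable_nat_add_iff m).mpr hs
  have h1 : ∑ i ∈ Finset.range (N - m), f (m + i) = ∑ i ∈ Finset.range (N - m), f (i + m) :=
    Finset.sum_congr rfl fun i _ => by rw [add_comm]
  rw [h1]
  exact Summable.sum_le_tsum _ (fun i _ => hf _) hs'

lemma sum_range_half_le (N : ℕ) : ∑ r ∈ Finset.range N, ((2:ℝ)⁻¹)^r ≤ 2 := by
  have h := Summable.sum_le_tsum (Finset.range N) (fun i _ => by positivity)
    (summable_geometric_of_lt_one (by norm_num) (by norm_num : (2:ℝ)⁻¹ < 1))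
  rw [tsum_geometric_of_lt_one (by norm_num) (by norm_num)] at h
  norm_num at h ⊢
  exact h

end helpers

section prep

lemma exists_mu (f : ℕ → ℝ) (h : Tendsto (fun m => ∑' i, f (i + m)) atTop (nhds 0)) :
    ∃ μ : ℕ → ℕ, StrictMono μ ∧ 1 ≤ μ 0 ∧ ∀ r, (∑' i, f (i + μ r)) ≤ ((4:ℝ)⁻¹)^r := by
  have hch : ∀ r : ℕ, ∃ N : ℕ, ∀ m ≥ N, (∑' i, f (i + m)) ≤ ((4:ℝ)⁻¹)^r := by
    intro r
    have hev := Metric.tendsto_atTop.mp h (((4:ℝ)⁻¹)^r) (by positivity)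
    obtain ⟨N, hN⟩ := hev
    exact ⟨N, fun m hm => by
      have := hN m hm
      rw [Real.dist_eq, sub_zero] at this
      exact le_of_lt (lt_of_abs_lt this)⟩
  choose N hN using hch
  refine ⟨fun r => Nat.rec (max (N 0) 1) (fun r ih => max (N (r+1)) (ih + 1)) r,
    strictMono_nat_of_lt_succ fun r => ?_, le_max_right _ _, fun r => ?_⟩
  · exact lt_of_lt_of_le (Nat.lt_succ_self _) (le_max_right _ _)
  · cases r with
    | zero => exact hN 0 _ (le_max_left _ _)
    | succ r => exact hN (r+1) _ (le_max_left _ _)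

lemma Wsum_le (f : ℕ → ℝ) (hf0 : ∀ i, 0 ≤ f i) (hfs : Summable f) (μ : ℕ → ℕ)
    (hμ : StrictMono μ) (hμt : ∀ r, (∑' i, f (i + μ r)) ≤ ((4:ℝ)⁻¹)^r) (Nn : ℕ) :
    ∑ i ∈ Finset.Ico (μ 1) Nn,
      (∑ r ∈ Finset.range (i+1), if 1 ≤ r ∧ μ r ≤ i then (2:ℝ)^r else 0) * f i ≤ 1 := by
  classical
  have hμge : ∀ n, n ≤ μ n := fun n => hμ.le_apply
  have stepA : ∀ i ∈ Finset.Ico (μ 1) Nn,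
      (∑ r ∈ Finset.range (i+1), if 1 ≤ r ∧ μ r ≤ i then (2:ℝ)^r else 0) * f i
        = ∑ r ∈ Finset.range Nn, (if 1 ≤ r ∧ μ r ≤ i then (2:ℝ)^r else 0) * f i := by
    intro i hi
    have hiN : i < Nn := (Finset.mem_Ico.mp hi).2
    rw [Finset.sum_mul]
    apply Finset.sum_subset
    · exact Finset.range_subset_range.mpr (by omega)
    · intro r _ hr
      have hri : i + 1 ≤ r := by
        by_contra hc
        exact hr (Finset.mem_range.mpr (by omega))
      have : ¬ (1 ≤ r ∧ μ r ≤ i) := by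
        rintro ⟨-, h2⟩
        have := hμge r
        omega
      rw [if_neg this, zero_mul]
  rw [Finset.sum_congr rfl stepA, Finset.sum_comm]
  have stepC : ∀ r ∈ Finset.range Nn,
      ∑ i ∈ Finset.Ico (μ 1) Nn, (if 1 ≤ r ∧ μ r ≤ i then (2:ℝ)^r else 0) * f i
        ≤ (if 1 ≤ r then ((2:ℝ)⁻¹)^r else 0) := by
    intro r _
    by_cases hr : 1 ≤ r
    · rw [if_pos hr]
      have h1 : ∑ i ∈ Finset.Ico (μ 1) Nn, (if 1 ≤ r ∧ μ r ≤ i then (2:ℝ)^r else 0) * f i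
          = ∑ i ∈ (Finset.Ico (μ 1) Nn).filter (fun i => μ r ≤ i), (2:ℝ)^r * f i := by
        rw [Finset.sum_filter]
        apply Finset.sum_congr rfl
        intro i _
        by_cases hc : μ r ≤ i
        · rw [if_pos ⟨hr, hc⟩, if_pos hc]
        · rw [if_neg (fun h => hc h.2), if_neg hc, zero_mul]
      rw [h1]
      have h2 : (Finset.Ico (μ 1) Nn).filter (fun i => μ r ≤ i) ⊆ Finset.Ico (μ r) Nn := by
        intro i hi
        rw [Finset.mem_filter, Finset.mem_Ico] at hi
        rw [Finset.mem_Ico]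
        exact ⟨hi.2, hi.1.2⟩
      have h3 : ∑ i ∈ (Finset.Ico (μ 1) Nn).filter (fun i => μ r ≤ i), (2:ℝ)^r * f i
          ≤ ∑ i ∈ Finset.Ico (μ r) Nn, (2:ℝ)^r * f i :=
        Finset.sum_le_sum_of_subset_of_nonneg h2
          (fun i _ _ => mul_nonneg (by positivity) (hf0 i))
      have h4 : ∑ i ∈ Finset.Ico (μ r) Nn, (2:ℝ)^r * f i
          = (2:ℝ)^r * ∑ i ∈ Finset.Ico (μ r) Nn, f i := (Finset.mul_sum _ _ _).symm
      have h5 : ∑ i ∈ Finset.Ico (μ r) Nn, f i ≤ ∑' i, f (i + μ r) :=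
        sum_Ico_le_tsum_tail f hf0 hfs _ _
      have h6 : (2:ℝ)^r * ∑ i ∈ Finset.Ico (μ r) Nn, f i ≤ (2:ℝ)^r * ((4:ℝ)⁻¹)^r :=
        mul_le_mul_of_nonneg_left (le_trans h5 (hμt r)) (by positivity)
      have h7 : (2:ℝ)^r * ((4:ℝ)⁻¹)^r = ((2:ℝ)⁻¹)^r := by
        rw [← mul_pow]; norm_num
      linarith [h3, h4 ▸ h6, h7 ▸ h6]
    · rw [if_neg hr]
      apply le_of_eq
      apply Finset.sum_eq_zero
      intro i _
      rw [if_neg (fun h => hr h.1), zero_mul]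
  calc ∑ r ∈ Finset.range Nn, ∑ i ∈ Finset.Ico (μ 1) Nn,
        (if 1 ≤ r ∧ μ r ≤ i then (2:ℝ)^r else 0) * f i
      ≤ ∑ r ∈ Finset.range Nn, (if 1 ≤ r then ((2:ℝ)⁻¹)^r else 0) :=
        Finset.sum_le_sum stepC
    _ ≤ 1 := by
        cases Nn with
        | zero => simp
        | succ n =>
            rw [Finset.sum_range_succ']
            simp only [if_neg (by omega : ¬ (1:ℕ) ≤ 0)]
            have he : ∀ i, (if 1 ≤ i + 1 then ((2:ℝ)⁻¹)^(i+1) else 0) = (2:ℝ)⁻¹ * ((2:ℝ)⁻¹)^i := by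
              intro i
              rw [if_pos (by omega), pow_succ]
              ring
            rw [Finset.sum_congr rfl (fun i _ => he i), ← Finset.mul_sum]
            have := sum_range_half_le n
            nlinarith
end prep

/-- Converse Borel–Cantelli under condition (CC), part (i) of Lemma `lemBC2`. -/

theorem converse_borel_cantelli [MeasurableSpace Ω] (S : SLE Ω)
    (P : Set (Measure Ω)) (hCC : CC S P)
    (X : ℕ → Ω → ℝ) (hH : ∀ n, X n ∈ S.H) (hind : IndepSeq S X)
    (v : Set Ω → ℝ)
    (hv : ∀ (A : Set Ω) (f : Ω → ℝ), f ∈ S.H →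
      (∀ ω, f ω ≤ Set.indicator A (fun _ => (1 : ℝ)) ω) → S.eps f ≤ v A)
    (hsum : Summable (fun n => v {ω | X n ω < 1})) :
    ∃ p ∈ P, p (⋃ m : ℕ, ⋂ i : ℕ, ⋂ (_ : m ≤ i), {ω | 1 ≤ X i ω}) = 1 := by
  classical
  set v' : ℕ → ℝ := fun i => v {ω | X i ω < 1} with hv'def
  have hsum' : Summable v' := hsum
  have he0 : ∀ i k : ℕ, 0 ≤ S.E (fun ω => gk k (X i ω)) := fun i k => eE_nonneg X hH k i
  have he1 : ∀ i k : ℕ, S.E (fun ω => gk k (X i ω)) ≤ 1 := fun i k => eE_le_one X hH k i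
  have hgmem : ∀ i k : ℕ, (fun ω => 1 - gk k (X i ω)) ∈ S.H := by
    intro i k
    have h1 := S.memH_affine (mem_gkX X hH k i) (-1) 1
    have h2 : (fun ω => (-1) * gk k (X i ω) + 1) = (fun ω => 1 - gk k (X i ω)) := by
      funext ω; ring
    rwa [h2] at h1
  have hev : ∀ i k : ℕ, 1 - v' i ≤ S.E (fun ω => gk k (X i ω)) := by
    intro i k
    have hle : ∀ ω, (1 - gk k (X i ω)) ≤ Set.indicator {ω' | X i ω' < 1} (fun _ => (1:ℝ)) ω := by
      intro ω
      by_cases hx : X i ω < 1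
      · rw [Set.indicator_of_mem (show ω ∈ {ω' | X i ω' < 1} from hx)]
        linarith [gk_nonneg k (X i ω)]
      · rw [Set.indicator_of_notMem (show ω ∉ {ω' | X i ω' < 1} from hx)]
        rw [gk_of_one_le k (not_lt.mp hx)]
        norm_num
    have heps := hv {ω' | X i ω' < 1} _ (hgmem i k) hle
    have hneg : (fun ω => -(1 - gk k (X i ω))) = (fun ω => gk k (X i ω) + (-1)) := by
      funext ω; ring
    unfold SLE.eps at heps
    rw [hneg, S.E_add_const (mem_gkX X hH k i) (-1)] at heps
    have hvi : v' i = v {ω' | X i ω' < 1} := rfl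
    rw [hvi]
    linarith
  have hv0 : ∀ i, 0 ≤ v' i := fun i => by
    have h1 := hev i 0; have h2 := he1 i 0; linarith
  set tl : ℕ → ℝ := fun m => ∑' i, v' (i + m) with htldef
  have htl0 : Tendsto tl atTop (nhds 0) := tendsto_sum_nat_add v'
  obtain ⟨μ, hμmono, hμ1, hμt⟩ := exists_mu v' htl0
  have hμge : ∀ n, n ≤ μ n := fun n => hμmono.le_apply
  have hμpos : ∀ n, 1 ≤ μ n := fun n => le_trans hμ1 (hμmono.monotone (Nat.zero_le n))
  have htlnn : ∀ m, 0 ≤ tl m := fun m => tsum_nonneg (fun i => hv0 _)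
  have hsum_tail : ∀ (s : Finset ℕ) (m : ℕ), (∀ i ∈ s, m ≤ i) → ∑ i ∈ s, v' i ≤ tl m := by
    intro s m hs
    by_cases hne : s.Nonempty
    · have hsub : s ⊆ Finset.Ico m (s.max' hne + 1) := fun i hi =>
        Finset.mem_Ico.mpr ⟨hs i hi, Nat.lt_succ_of_le (s.le_max' i hi)⟩
      calc ∑ i ∈ s, v' i ≤ ∑ i ∈ Finset.Ico m (s.max' hne + 1), v' i :=
            Finset.sum_le_sum_of_subset_of_nonneg hsub (fun i _ _ => hv0 i)
        _ ≤ tl m := sum_Ico_le_tsum_tail v' hv0 hsum' m _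
    · rw [Finset.not_nonempty_iff_eq_empty.mp hne]
      simpa using htlnn m
  set W : ℕ → ℝ := fun i => ∑ r ∈ Finset.range (i+1), if 1 ≤ r ∧ μ r ≤ i then (2:ℝ)^r else 0
    with hWdef
  have hW0 : ∀ i, 0 ≤ W i := fun i =>
    Finset.sum_nonneg fun r _ => by split_ifs <;> positivity
  have hWge : ∀ r i, 1 ≤ r → μ r ≤ i → (2:ℝ)^r ≤ W i := by
    intro r i hr hri
    show (2:ℝ)^r ≤ ∑ r' ∈ Finset.range (i+1), if 1 ≤ r' ∧ μ r' ≤ i then (2:ℝ)^r' else 0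
    have hmem : r ∈ Finset.range (i+1) := Finset.mem_range.mpr (by have := hμge r; omega)
    have h := Finset.single_le_sum
      (f := fun r' => if 1 ≤ r' ∧ μ r' ≤ i then (2:ℝ)^r' else 0)
      (fun r' _ => show (0:ℝ) ≤ if 1 ≤ r' ∧ μ r' ≤ i then (2:ℝ)^r' else 0 by
        split_ifs <;> positivity) hmem
    have h2 : (if 1 ≤ r ∧ μ r ≤ i then (2:ℝ)^r else 0)
        ≤ ∑ r' ∈ Finset.range (i+1), if 1 ≤ r' ∧ μ r' ≤ i then (2:ℝ)^r' else 0 := h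
    rwa [if_pos ⟨hr, hri⟩] at h2
  have hWsum : ∀ Nn, ∑ i ∈ Finset.Ico (μ 1) Nn, W i * v' i ≤ 1 := fun Nn =>
    Wsum_le v' hv0 hsum' μ hμmono hμt Nn
  set wj : ℕ → ℕ → ℝ := fun j i => ((2:ℝ)⁻¹)^j * W i with hwjdef
  have hwj0 : ∀ j i, 0 ≤ wj j i := fun j i => mul_nonneg (by positivity) (hW0 i)
  set Ts : ℕ → Finset ℕ := fun j => Finset.Icc (μ j) (μ (j+1)) with hTsdef
  set Ss : ℕ → Finset ℕ := fun j => Finset.Ico (μ 1) (μ j) with hSsdef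
  set Gf : ℕ → Ω → ℝ := fun j => tmpl X (Ts j) (Ss j) j (wj j) 1 0 with hGfdef
  have hGmem : ∀ j, Gf j ∈ S.H := by
    intro j
    rw [hGfdef]
    apply tmpl_mem X hH _ _ (μ (j+1) + 1)
    · intro i hi
      rw [hTsdef] at hi
      have := (Finset.mem_Icc.mp hi).2
      omega
    · intro i hi
      rw [hSsdef] at hi
      have h2 := (Finset.mem_Ico.mp hi).2
      have h3 : μ j ≤ μ (j+1) := hμmono.monotone (Nat.le_succ j)
      omega
    · exact hwj0 j
  have hGbdd : ∀ j ω, |Gf j ω| ≤ 1 + ∑ i ∈ Ss j, wj j i := by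
    intro j ω
    have := tmpl_bdd X (Ts j) (Ss j) j (wj j) (hwj0 j) 1 0 ω
    simpa using this
  have hEG : ∀ j, S.E (Gf j)
      = 1 * ∏ i ∈ Ts j, S.E (fun ω => gk j (X i ω)) + 0
        - ∑ i ∈ Ss j, wj j i * (1 - S.E (fun ω => gk j (X i ω))) := by
    intro j
    rw [hGfdef]
    refine E_tmpl X hH hind j (wj j) (hwj0 j) ((Ts j).card + (Ss j).card) (Ts j) (Ss j)
      rfl ?_ ?_ ?_ 1 zero_le_one 0
    · intro i hi i' hi'
      simp only [hSsdef] at hi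
      simp only [hTsdef] at hi'
      have h1 := (Finset.mem_Ico.mp hi).2
      have h2 := (Finset.mem_Icc.mp hi').1
      omega
    · intro i hi
      simp only [hTsdef] at hi
      have h1 := (Finset.mem_Icc.mp hi).1
      have h2 := hμpos j
      omega
    · intro i hi
      simp only [hSsdef] at hi
      have h1 := (Finset.mem_Ico.mp hi).1
      have h2 := hμpos 1
      omega
  have hEG_ge : ∀ j, 1 - tl (μ j) - ((2:ℝ)⁻¹)^j ≤ S.E (Gf j) := by
    intro j
    rw [hEG j]
    have hprod : 1 - tl (μ j) ≤ ∏ i ∈ Ts j, S.E (fun ω => gk j (X i ω)) := by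
      have h1 : 1 - ∑ i ∈ Ts j, v' i ≤ ∏ i ∈ Ts j, S.E (fun ω => gk j (X i ω)) :=
        prod_ge_one_sub_sum (Ts j) _ v'
          (fun i _ => ⟨hev i j, he0 i j, hv0 i, he1 i j⟩)
      have h2 : ∑ i ∈ Ts j, v' i ≤ tl (μ j) := by
        apply hsum_tail
        intro i hi
        simp only [hTsdef] at hi
        exact (Finset.mem_Icc.mp hi).1
      linarith
    have hpen : ∑ i ∈ Ss j, wj j i * (1 - S.E (fun ω => gk j (X i ω))) ≤ ((2:ℝ)⁻¹)^j := by
      have h1 : ∀ i ∈ Ss j, wj j i * (1 - S.E (fun ω => gk j (X i ω)))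
          ≤ ((2:ℝ)⁻¹)^j * (W i * v' i) := by
        intro i _
        have h2 : 1 - S.E (fun ω => gk j (X i ω)) ≤ v' i := by linarith [hev i j]
        have h3 : 0 ≤ 1 - S.E (fun ω => gk j (X i ω)) := by linarith [he1 i j]
        have h4 : (0:ℝ) ≤ ((2:ℝ)⁻¹)^j := by positivity
        have h5 : wj j i = ((2:ℝ)⁻¹)^j * W i := by rw [hwjdef]
        rw [h5]
        have h6 : (0:ℝ) ≤ ((2:ℝ)⁻¹)^j * W i := mul_nonneg h4 (hW0 i)
        calc ((2:ℝ)⁻¹)^j * W i * (1 - S.E (fun ω => gk j (X i ω)))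
            ≤ ((2:ℝ)⁻¹)^j * W i * v' i := mul_le_mul_of_nonneg_left h2 h6
          _ = ((2:ℝ)⁻¹)^j * (W i * v' i) := by ring
      calc ∑ i ∈ Ss j, wj j i * (1 - S.E (fun ω => gk j (X i ω)))
          ≤ ∑ i ∈ Ss j, ((2:ℝ)⁻¹)^j * (W i * v' i) := Finset.sum_le_sum h1
        _ = ((2:ℝ)⁻¹)^j * ∑ i ∈ Ss j, W i * v' i := by rw [Finset.mul_sum]
        _ ≤ ((2:ℝ)⁻¹)^j * 1 := by
            apply mul_le_mul_of_nonneg_left _ (by positivity)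
            have := hWsum (μ j)
            simpa [hSsdef] using this
        _ = ((2:ℝ)⁻¹)^j := mul_one _
    linarith
  obtain ⟨p₀, hp₀⟩ := hCC.1
  have hPsel : ∀ j, ∃ p ∈ P, (2 ≤ j → S.E (Gf j) - ((2:ℝ)⁻¹)^j ≤ ∫ ω, Gf j ω ∂p) := by
    intro j
    by_cases hc : 0 ≤ S.E (Gf j) - ((2:ℝ)⁻¹)^j
    · obtain ⟨p, hp, hple⟩ := exists_near_sup hCC (hGmem j) (hGbdd j)
        (show (0:ℝ) < ((2:ℝ)⁻¹)^j by positivity) hc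
      exact ⟨p, hp, fun _ => hple⟩
    · refine ⟨p₀, hp₀, fun h2j => absurd ?_ hc⟩
      have h1 : tl (μ j) ≤ ((4:ℝ)⁻¹)^j := hμt j
      have h2 : ((4:ℝ)⁻¹)^j ≤ ((4:ℝ)⁻¹)^2 :=
        pow_le_pow_of_le_one (by norm_num) (by norm_num) h2j
      have h3 : ((2:ℝ)⁻¹)^j ≤ ((2:ℝ)⁻¹)^2 :=
        pow_le_pow_of_le_one (by norm_num) (by norm_num) h2j
      have h4 := hEG_ge j
      norm_num at h2 h3
      linarith
  choose Pj hPjP hPj using hPsel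
  set Ff : ℕ → ℕ → ℕ → Ω → ℝ := fun a M k => fun ω => ∏ i ∈ Finset.Icc a M, gk k (X i ω)
    with hFfdef
  have hFtmpl : ∀ a M k, Ff a M k = tmpl X (Finset.Icc a M) ∅ k (fun _ => 0) 1 0 := by
    intro a M k
    funext ω
    rw [hFfdef, tmpl]
    simp
  have hFmem : ∀ a M k, Ff a M k ∈ S.H := by
    intro a M k
    rw [hFtmpl]
    apply tmpl_mem X hH _ _ (M + 1)
    · intro i hi; have := (Finset.mem_Icc.mp hi).2; omega
    · intro i hi; exact absurd hi (Finset.notMem_empty i)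
    · intro i; exact le_rfl
  have hF01 : ∀ a M k ω, 0 ≤ Ff a M k ω ∧ Ff a M k ω ≤ 1 := by
    intro a M k ω
    rw [hFfdef]
    exact ⟨Finset.prod_nonneg fun i _ => gk_nonneg _ _,
      Finset.prod_le_one (fun i _ => gk_nonneg _ _) (fun i _ => gk_le_one _ _)⟩
  have hFbdd : ∀ a M k ω, |Ff a M k ω| ≤ 1 := by
    intro a M k ω
    rw [abs_le]
    exact ⟨by linarith [(hF01 a M k ω).1], (hF01 a M k ω).2⟩
  have hFint : ∀ a M k, ∀ p ∈ P, Integrable (Ff a M k) p := fun a M k p hp =>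
    hCC.integrable (hFmem a M k) (hFbdd a M k) hp
  have hGint : ∀ j, ∀ p ∈ P, Integrable (Gf j) p := fun j p hp =>
    hCC.integrable (hGmem j) (hGbdd j) hp
  have hgbdd : ∀ i k ω, |1 - gk k (X i ω)| ≤ 1 := by
    intro i k ω
    rw [abs_le]
    constructor
    · linarith [gk_le_one k (X i ω)]
    · linarith [gk_nonneg k (X i ω)]
  have hgint : ∀ i k, ∀ p ∈ P, Integrable (fun ω => 1 - gk k (X i ω)) p := fun i k p hp =>
    hCC.integrable (hgmem i k) (fun ω => hgbdd i k ω) hp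
  have hmain : ∀ r M k j : ℕ, 1 ≤ r → 1 ≤ k → r ≤ j → k ≤ j → M ≤ j → 2 ≤ j →
      1 - 3*((2:ℝ)⁻¹)^j - 3*((2:ℝ)⁻¹)^r ≤ ∫ ω, Ff (μ r) M k ω ∂(Pj j) := by
    intro r M k j hr hk hrj hkj hMj h2j
    have hpjP := hPjP j
    haveI hprobj : IsProbabilityMeasure (Pj j) := hCC.2.1 _ hpjP
    have hμrj : μ r ≤ μ j := hμmono.monotone hrj
    have hμjj1 : μ j ≤ μ (j+1) := hμmono.monotone (Nat.le_succ j)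
    have hμ1r : μ 1 ≤ μ r := hμmono.monotone hr
    have hMμ : M ≤ μ (j+1) := le_trans hMj (le_trans (hμge j) hμjj1)
    have hG1 : 1 - tl (μ j) - 2*((2:ℝ)⁻¹)^j ≤ ∫ ω, Gf j ω ∂(Pj j) := by
      have h1 := hPj j h2j
      have h2 := hEG_ge j
      linarith
    have hGeq : ∀ ω, Gf j ω = 1 * (∏ i ∈ Ts j, gk j (X i ω)) + 0
        - ∑ i ∈ Ss j, wj j i * (1 - gk j (X i ω)) := by
      intro ω
      simp only [hGfdef, tmpl]
    have hFeq : ∀ a M' k' ω, Ff a M' k' ω = ∏ i ∈ Finset.Icc a M', gk k' (X i ω) := by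
      intro a M' k' ω
      simp only [hFfdef]
    have hTseq : Ts j = Finset.Icc (μ j) (μ (j+1)) := by simp only [hTsdef]
    have hSseq : Ss j = Finset.Ico (μ 1) (μ j) := by simp only [hSsdef]
    have hpen0 : ∀ ω, 0 ≤ ∑ i ∈ Ss j, wj j i * (1 - gk j (X i ω)) := fun ω =>
      Finset.sum_nonneg fun i _ => mul_nonneg (hwj0 j i) (by linarith [gk_le_one j (X i ω)])
    have hGF : ∀ ω, Gf j ω ≤ Ff (μ j) (μ (j+1)) j ω := by
      intro ω
      rw [hGeq ω, hFeq, ← hTseq]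
      linarith [hpen0 ω]
    have hint1 : ∫ ω, Gf j ω ∂(Pj j) ≤ ∫ ω, Ff (μ j) (μ (j+1)) j ω ∂(Pj j) :=
      integral_mono (hGint j _ hpjP) (hFint _ _ _ _ hpjP) hGF
    have hFle1 : ∫ ω, Ff (μ j) (μ (j+1)) j ω ∂(Pj j) ≤ 1 := by
      calc ∫ ω, Ff (μ j) (μ (j+1)) j ω ∂(Pj j) ≤ ∫ _ω, (1:ℝ) ∂(Pj j) :=
            integral_mono (hFint _ _ _ _ hpjP) (integrable_const 1) (fun ω => (hF01 _ _ _ ω).2)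
        _ = 1 := by simp
    have hpenid : ∫ ω, Ff (μ j) (μ (j+1)) j ω ∂(Pj j) - ∫ ω, Gf j ω ∂(Pj j)
        = ∑ i ∈ Ss j, wj j i * ∫ ω, (1 - gk j (X i ω)) ∂(Pj j) := by
      have hfun : (fun ω => Ff (μ j) (μ (j+1)) j ω - Gf j ω)
          = fun ω => ∑ i ∈ Ss j, wj j i * (1 - gk j (X i ω)) := by
        funext ω
        rw [hGeq ω, hFeq, ← hTseq]
        ring
      have hL := integral_sub (hFint (μ j) (μ (j+1)) j _ hpjP) (hGint j _ hpjP)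
      rw [← hL]
      have hR : ∫ ω, (∑ i ∈ Ss j, wj j i * (1 - gk j (X i ω))) ∂(Pj j)
          = ∑ i ∈ Ss j, wj j i * ∫ ω, (1 - gk j (X i ω)) ∂(Pj j) := by
        rw [integral_finset_sum _ (fun i _ => ((hgint i j _ hpjP).const_mul (wj j i)))]
        exact Finset.sum_congr rfl fun i _ => integral_const_mul _ _
      rw [← hR]
      exact congrArg _ hfun
    have hpentotal : ∑ i ∈ Ss j, wj j i * ∫ ω, (1 - gk j (X i ω)) ∂(Pj j)
        ≤ tl (μ j) + 2*((2:ℝ)⁻¹)^j := by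
      rw [← hpenid]
      linarith
    have hg0int : ∀ i, 0 ≤ ∫ ω, (1 - gk j (X i ω)) ∂(Pj j) := fun i =>
      integral_nonneg (fun ω => show (0:ℝ) ≤ 1 - gk j (X i ω) by
        linarith [gk_le_one j (X i ω)])
    have htailpen : ∑ i ∈ Finset.Ico (μ r) (μ j), ∫ ω, (1 - gk j (X i ω)) ∂(Pj j)
        ≤ 3*((2:ℝ)⁻¹)^r := by
      set A := ((2:ℝ)⁻¹)^j * (2:ℝ)^r with hAdef
      have hA0 : 0 < A := by rw [hAdef]; positivity
      have h1 : A * ∑ i ∈ Finset.Ico (μ r) (μ j), ∫ ω, (1 - gk j (X i ω)) ∂(Pj j)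
          ≤ ∑ i ∈ Finset.Ico (μ r) (μ j), wj j i * ∫ ω, (1 - gk j (X i ω)) ∂(Pj j) := by
        rw [Finset.mul_sum]
        apply Finset.sum_le_sum
        intro i hi
        have hge : A ≤ wj j i := by
          have h5 := hWge r i hr (Finset.mem_Ico.mp hi).1
          have h6 : wj j i = ((2:ℝ)⁻¹)^j * W i := by simp only [hwjdef]
          rw [h6, hAdef]
          exact mul_le_mul_of_nonneg_left h5 (by positivity)
        exact mul_le_mul_of_nonneg_right hge (hg0int i)
      have h2 : ∑ i ∈ Finset.Ico (μ r) (μ j), wj j i * ∫ ω, (1 - gk j (X i ω)) ∂(Pj j)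
          ≤ ∑ i ∈ Ss j, wj j i * ∫ ω, (1 - gk j (X i ω)) ∂(Pj j) := by
        apply Finset.sum_le_sum_of_subset_of_nonneg
        · rw [hSseq]
          intro i hi
          rw [Finset.mem_Ico] at hi ⊢
          omega
        · exact fun i _ _ => mul_nonneg (hwj0 j i) (hg0int i)
      have h3 : A * ∑ i ∈ Finset.Ico (μ r) (μ j), ∫ ω, (1 - gk j (X i ω)) ∂(Pj j)
          ≤ tl (μ j) + 2*((2:ℝ)⁻¹)^j := le_trans h1 (le_trans h2 hpentotal)
      have h4 : tl (μ j) + 2*((2:ℝ)⁻¹)^j ≤ 3*((2:ℝ)⁻¹)^j := by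
        have h5 := hμt j
        have h6 : ((4:ℝ)⁻¹)^j ≤ ((2:ℝ)⁻¹)^j :=
          pow_le_pow_left₀ (by norm_num) (by norm_num) j
        have h7 : tl (μ j) ≤ ((4:ℝ)⁻¹)^j := h5
        linarith
      have hpow : (2:ℝ)^r * ((2:ℝ)⁻¹)^r = 1 := by
        rw [← mul_pow]; norm_num
      have h6 : A * (3*((2:ℝ)⁻¹)^r) = 3*((2:ℝ)⁻¹)^j := by
        rw [hAdef]
        calc ((2:ℝ)⁻¹)^j * (2:ℝ)^r * (3*((2:ℝ)⁻¹)^r)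
            = 3*((2:ℝ)⁻¹)^j * ((2:ℝ)^r * ((2:ℝ)⁻¹)^r) := by ring
          _ = 3*((2:ℝ)⁻¹)^j := by rw [hpow, mul_one]
      have h7 : A * ∑ i ∈ Finset.Ico (μ r) (μ j), ∫ ω, (1 - gk j (X i ω)) ∂(Pj j)
          ≤ A * (3*((2:ℝ)⁻¹)^r) := by rw [h6]; linarith
      exact le_of_mul_le_mul_left h7 hA0
    have hchain1 : ∀ ω, Ff (μ r) (μ (j+1)) j ω ≤ Ff (μ r) M k ω := by
      intro ω
      rw [hFeq, hFeq]
      have hstep1 : ∏ i ∈ Finset.Icc (μ r) (μ (j+1)), gk j (X i ω)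
          ≤ ∏ i ∈ Finset.Icc (μ r) M, gk j (X i ω) :=
        prod_subset_le _ _ _ (Finset.Icc_subset_Icc le_rfl hMμ)
          (fun i _ => ⟨gk_nonneg _ _, gk_le_one _ _⟩)
      have hstep2 : ∏ i ∈ Finset.Icc (μ r) M, gk j (X i ω)
          ≤ ∏ i ∈ Finset.Icc (μ r) M, gk k (X i ω) :=
        Finset.prod_le_prod (fun i _ => gk_nonneg _ _) (fun i _ => gk_anti hkj _)
      linarith
    have hchain2 : ∀ ω, Ff (μ j) (μ (j+1)) j ω
        - ∑ i ∈ Finset.Ico (μ r) (μ j), (1 - gk j (X i ω)) ≤ Ff (μ r) (μ (j+1)) j ω := by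
      intro ω
      rw [hFeq, hFeq]
      have hAB : Finset.Icc (μ j) (μ (j+1)) ⊆ Finset.Icc (μ r) (μ (j+1)) :=
        Finset.Icc_subset_Icc hμrj le_rfl
      have hsd : Finset.Icc (μ r) (μ (j+1)) \ Finset.Icc (μ j) (μ (j+1))
          = Finset.Ico (μ r) (μ j) := by
        ext i
        simp only [Finset.mem_sdiff, Finset.mem_Icc, Finset.mem_Ico]
        omega
      have h := prod_ge_prod_sub_sum (Finset.Icc (μ j) (μ (j+1)))
        (Finset.Icc (μ r) (μ (j+1))) (fun i => gk j (X i ω)) hAB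
        (fun i _ => ⟨gk_nonneg _ _, gk_le_one _ _⟩)
      rw [hsd] at h
      exact h
    have hsumint : Integrable (fun ω => ∑ i ∈ Finset.Ico (μ r) (μ j), (1 - gk j (X i ω)))
        (Pj j) := integrable_finset_sum _ (fun i _ => hgint i j _ hpjP)
    have hint3 : ∫ ω, Ff (μ j) (μ (j+1)) j ω ∂(Pj j)
        - ∑ i ∈ Finset.Ico (μ r) (μ j), ∫ ω, (1 - gk j (X i ω)) ∂(Pj j)
        ≤ ∫ ω, Ff (μ r) (μ (j+1)) j ω ∂(Pj j) := by
      have h1 : ∫ ω, (Ff (μ j) (μ (j+1)) j ω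
            - ∑ i ∈ Finset.Ico (μ r) (μ j), (1 - gk j (X i ω))) ∂(Pj j)
          ≤ ∫ ω, Ff (μ r) (μ (j+1)) j ω ∂(Pj j) :=
        integral_mono ((hFint (μ j) (μ (j+1)) j _ hpjP).sub hsumint)
          (hFint _ _ _ _ hpjP) hchain2
      rw [integral_sub (hFint (μ j) (μ (j+1)) j _ hpjP) hsumint,
        integral_finset_sum _ (fun i _ => hgint i j _ hpjP)] at h1
      exact h1
    have hint2 : ∫ ω, Ff (μ r) (μ (j+1)) j ω ∂(Pj j) ≤ ∫ ω, Ff (μ r) M k ω ∂(Pj j) :=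
      integral_mono (hFint _ _ _ _ hpjP) (hFint _ _ _ _ hpjP) hchain1
    have h6 : ((4:ℝ)⁻¹)^j ≤ ((2:ℝ)⁻¹)^j := pow_le_pow_left₀ (by norm_num) (by norm_num) j
    have h7 : tl (μ j) ≤ ((4:ℝ)⁻¹)^j := hμt j
    linarith [hint1, hint2, hint3, htailpen, hG1]
  set Y : ℕ → Ω → ℝ := fun n ω => cl2 (X n ω) with hYdef
  have hYok : ∀ n, Y n ∈ S.H ∧ ∃ M : ℝ, ∀ ω, |Y n ω| ≤ M := by
    intro n
    constructor
    · have halip : ALip (n := 1) (fun x => cl2 (x 0)) 1 := by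
        intro x y
        calc |cl2 (x 0) - cl2 (y 0)| ≤ |x 0 - y 0| := cl2_lip _ _
          _ ≤ 1 * dist x y := by
              rw [one_mul, show |x 0 - y 0| = dist (x 0) (y 0) from (Real.dist_eq _ _).symm]
              exact dist_le_pi_dist x y 0
      have := S.memH_comp (n := 1) _ halip (fun _ => X n) (fun _ => hH n)
      rw [hYdef]
      exact this
    · exact ⟨2, fun ω => by rw [hYdef]; exact cl2_bdd _⟩
  obtain ⟨σ, hσmono, Q, hQP, hQconv⟩ := hCC.2.2.2 Y hYok Pj hPjP
  have hσge : ∀ n, n ≤ σ n := fun n => hσmono.le_apply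
  have hconvF : ∀ a M k : ℕ, 1 ≤ k →
      Tendsto (fun n => ∫ ω, Ff a M k ω ∂(Pj (σ n))) atTop
        (nhds (∫ ω, Ff a M k ω ∂Q)) := by
    intro a M k hk
    have hlip : ∃ K : NNReal, LipschitzWith K
        (fun y : Fin (M+1) → ℝ => ∏ i ∈ Finset.Icc a M, gk k (coordF (M+1) y i)) := by
      apply alip_lipschitzWith (C := ∑ _i ∈ Finset.Icc a M, (k:ℝ))
      · exact Finset.sum_nonneg fun i _ => Nat.cast_nonneg _
      · exact alip_prod _ _ _ (fun i _ => alip_coordF_gk k i)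
          (fun i _ x => ⟨gk_nonneg _ _, gk_le_one _ _⟩)
    have hbdd : ∃ Mb : ℝ, ∀ y : Fin (M+1) → ℝ,
        |∏ i ∈ Finset.Icc a M, gk k (coordF (M+1) y i)| ≤ Mb := by
      refine ⟨1, fun y => abs_le.mpr ⟨?_, ?_⟩⟩
      · have := Finset.prod_nonneg (f := fun i => gk k (coordF (M+1) y i))
          (s := Finset.Icc a M) (fun i _ => gk_nonneg _ _)
        linarith
      · exact Finset.prod_le_one (fun i _ => gk_nonneg _ _) (fun i _ => gk_le_one _ _)
    have h := hQconv (M+1)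
      (fun y : Fin (M+1) → ℝ => ∏ i ∈ Finset.Icc a M, gk k (coordF (M+1) y i)) hlip hbdd
    have hfun : ∀ ω : Ω,
        (∏ i ∈ Finset.Icc a M, gk k (coordF (M+1) (fun i : Fin (M+1) => Y i.val ω) i))
          = Ff a M k ω := by
      intro ω
      simp only [hFfdef]
      apply Finset.prod_congr rfl
      intro i hi
      have hilt : i < M + 1 := by
        have := (Finset.mem_Icc.mp hi).2
        omega
      rw [coordF, dif_pos hilt]
      show gk k (Y i ω) = gk k (X i ω)
      simp only [hYdef]
      exact gk_cl2 hk _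
    have heq1 : ∀ p : Measure Ω, ∫ ω, Ff a M k ω ∂p
        = ∫ ω, (fun y : Fin (M+1) → ℝ => ∏ i ∈ Finset.Icc a M, gk k (coordF (M+1) y i))
            (fun i : Fin (M+1) => Y i.val ω) ∂p := by
      intro p
      apply integral_congr_ae
      apply Filter.Eventually.of_forall
      intro ω
      exact (hfun ω).symm
    simp only [heq1]
    exact h
  have hQF : ∀ r M k : ℕ, 1 ≤ r → 1 ≤ k →
      1 - 3*((2:ℝ)⁻¹)^r ≤ ∫ ω, Ff (μ r) M k ω ∂Q := by
    intro r M k hr hk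
    have hL := hconvF (μ r) M k hk
    apply le_of_forall_pos_le_add
    intro ε hε
    have htend : Tendsto (fun n : ℕ => 3*((2:ℝ)⁻¹)^n) atTop (nhds 0) := by
      have h1 : Tendsto (fun n : ℕ => ((2:ℝ)⁻¹)^n) atTop (nhds 0) :=
        tendsto_pow_atTop_nhds_zero_of_lt_one (by norm_num) (by norm_num)
      have h2 := h1.const_mul (3:ℝ)
      simpa using h2
    obtain ⟨n₁, hn₁⟩ := Metric.tendsto_atTop.mp htend ε hε
    have hev : ∀ᶠ n in atTop,
        1 - 3*((2:ℝ)⁻¹)^r - ε ≤ ∫ ω, Ff (μ r) M k ω ∂(Pj (σ n)) := by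
      filter_upwards [eventually_ge_atTop (max n₁ (max r (max k (max M 2))))] with n hn
      have hσn := hσge n
      have hb := hmain r M k (σ n) hr hk (by omega) (by omega) (by omega) (by omega)
      have hd : 3*((2:ℝ)⁻¹)^(σ n) ≤ ε := by
        have h2 := hn₁ (σ n) (by omega)
        rw [Real.dist_eq, sub_zero] at h2
        exact le_of_lt (lt_of_abs_lt h2)
      linarith
    have hge := ge_of_tendsto hL hev
    linarith
  haveI hQprob : IsProbabilityMeasure Q := hCC.2.1 Q hQP
  refine ⟨Q, hQP, ?_⟩
  set Bset := ⋃ m : ℕ, ⋂ i : ℕ, ⋂ (_ : m ≤ i), {ω | 1 ≤ X i ω} with hBdef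
  have hQB1 : Q Bset ≤ 1 := prob_le_one
  refine le_antisymm hQB1 ?_
  have hkey : ∀ r : ℕ, 1 ≤ r → 1 ≤ Q Bset + ENNReal.ofReal (6*((2:ℝ)⁻¹)^r) := by
    intro r hr
    set F' : ℕ → Ω → ℝ := fun n => Ff (μ r) (μ r + n) (n+1) with hF'def
    have hF'eq : ∀ n ω, F' n ω = ∏ i ∈ Finset.Icc (μ r) (μ r + n), gk (n+1) (X i ω) := by
      intro n ω
      simp only [hF'def, hFfdef]
    have hFQ : ∀ n, 1 - 3*((2:ℝ)⁻¹)^r ≤ ∫ ω, F' n ω ∂Q := fun n =>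
      hQF r (μ r + n) (n+1) hr (by omega)
    have hIntF : ∀ n, Integrable (F' n) Q := fun n => hFint _ _ _ _ hQP
    have hF'01 : ∀ n ω, 0 ≤ F' n ω ∧ F' n ω ≤ 1 := fun n ω => hF01 _ _ _ ω
    have hanti : ∀ n ω, F' (n+1) ω ≤ F' n ω := by
      intro n ω
      rw [hF'eq, hF'eq]
      calc ∏ i ∈ Finset.Icc (μ r) (μ r + (n+1)), gk (n+2) (X i ω)
          ≤ ∏ i ∈ Finset.Icc (μ r) (μ r + n), gk (n+2) (X i ω) :=
            prod_subset_le _ _ _ (Finset.Icc_subset_Icc le_rfl (by omega))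
              (fun i _ => ⟨gk_nonneg _ _, gk_le_one _ _⟩)
        _ ≤ ∏ i ∈ Finset.Icc (μ r) (μ r + n), gk (n+1) (X i ω) :=
            Finset.prod_le_prod (fun i _ => gk_nonneg _ _)
              (fun i _ => gk_anti (by omega) _)
    have hmeas : ∀ n, AEStronglyMeasurable (F' n) Q := fun n => (hIntF n).aestronglyMeasurable
    set Gm : ℕ → Ω → ℝ := fun n => (hmeas n).mk (F' n) with hGmdef
    have hGmmeas : ∀ n, StronglyMeasurable (Gm n) := fun n => (hmeas n).stronglyMeasurable_mk
    have hae : ∀ n, F' n =ᵐ[Q] Gm n := fun n => (hmeas n).ae_eq_mk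
    set NN : Set Ω := ⋃ n, {ω | F' n ω ≠ Gm n ω} with hNNdef
    have hNN0 : Q NN = 0 := by
      rw [hNNdef]
      apply measure_iUnion_null
      intro n
      exact ae_iff.mp (hae n)
    set NN' := toMeasurable Q NN with hNN'def
    have hNN'meas : MeasurableSet NN' := measurableSet_toMeasurable _ _
    have hNN'0 : Q NN' = 0 := by rw [hNN'def, measure_toMeasurable]; exact hNN0
    have hnotNN : ∀ ω, ω ∉ NN' → ∀ n, F' n ω = Gm n ω := by
      intro ω hω n
      by_contra hne
      exact hω (subset_toMeasurable Q NN (Set.mem_iUnion.mpr ⟨n, hne⟩))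
    set Sn : ℕ → Set Ω := fun n => {ω | (2⁻¹:ℝ) ≤ Gm n ω} \ NN' with hSndef
    have hSmeas : ∀ n, MeasurableSet (Sn n) := fun n =>
      (measurableSet_le measurable_const (hGmmeas n).measurable).diff hNN'meas
    have hSF : ∀ n, Sn n = {ω | (2⁻¹:ℝ) ≤ F' n ω} \ NN' := by
      intro n
      simp only [hSndef]
      ext ω
      simp only [Set.mem_diff, Set.mem_setOf_eq]
      constructor
      · rintro ⟨h1, h2⟩
        rw [hnotNN ω h2 n]
        exact ⟨h1, h2⟩
      · rintro ⟨h1, h2⟩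
        rw [← hnotNN ω h2 n]
        exact ⟨h1, h2⟩
    have hSanti : Antitone Sn := by
      apply antitone_nat_of_succ_le
      intro n
      rw [hSF n, hSF (n+1)]
      apply Set.diff_subset_diff_left
      intro ω hω
      simp only [Set.mem_setOf_eq] at hω ⊢
      exact le_trans hω (hanti n ω)
    have hSQ : ∀ n, 1 ≤ Q (Sn n) + ENNReal.ofReal (6*((2:ℝ)⁻¹)^r) := by
      intro n
      have hGmint : Integrable (Gm n) Q := (hIntF n).congr (hae n)
      have hψint : Integrable (fun ω => 1 - Gm n ω) Q := (integrable_const 1).sub hGmint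
      have hψnn : 0 ≤ᵐ[Q] (fun ω => 1 - Gm n ω) := by
        filter_upwards [hae n] with ω hω
        have h1 := (hF'01 n ω).2
        simp only [Pi.zero_apply]
        rw [← hω]
        linarith
      have hmark := mul_meas_ge_le_integral_of_nonneg hψnn hψint 2⁻¹
      have hIeq : ∫ ω, (1 - Gm n ω) ∂Q = 1 - ∫ ω, F' n ω ∂Q := by
        rw [integral_sub (integrable_const 1) hGmint,
          integral_congr_ae (hae n).symm]
        simp
      have hQA : (Q {ω | (2⁻¹:ℝ) ≤ 1 - Gm n ω}).toReal ≤ 6*((2:ℝ)⁻¹)^r := by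
        have h1 := hFQ n
        rw [hIeq, measureReal_def] at hmark
        linarith
      have hQA' : Q {ω | (2⁻¹:ℝ) ≤ 1 - Gm n ω} ≤ ENNReal.ofReal (6*((2:ℝ)⁻¹)^r) := by
        rw [← ENNReal.ofReal_toReal (measure_ne_top Q _)]
        exact ENNReal.ofReal_le_ofReal hQA
      have hcompl : (Sn n)ᶜ ⊆ {ω | (2⁻¹:ℝ) ≤ 1 - Gm n ω} ∪ NN' := by
        intro ω hω
        by_cases hN : ω ∈ NN'
        · exact Or.inr hN
        · left
          simp only [Set.mem_setOf_eq]
          have h1 : ¬ ((2⁻¹:ℝ) ≤ Gm n ω) := by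
            intro hc
            exact hω (show ω ∈ Sn n from ⟨hc, hN⟩)
          linarith [not_le.mp h1]
      have h1 : Q ((Sn n)ᶜ) ≤ ENNReal.ofReal (6*((2:ℝ)⁻¹)^r) := by
        calc Q ((Sn n)ᶜ) ≤ Q ({ω | (2⁻¹:ℝ) ≤ 1 - Gm n ω} ∪ NN') := measure_mono hcompl
          _ ≤ Q {ω | (2⁻¹:ℝ) ≤ 1 - Gm n ω} + Q NN' := measure_union_le _ _
          _ = Q {ω | (2⁻¹:ℝ) ≤ 1 - Gm n ω} := by rw [hNN'0, add_zero]
          _ ≤ ENNReal.ofReal (6*((2:ℝ)⁻¹)^r) := hQA'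
      have h2 : Q Set.univ ≤ Q (Sn n) + Q ((Sn n)ᶜ) := by
        rw [← Set.union_compl_self (Sn n)]
        exact measure_union_le _ _
      rw [measure_univ] at h2
      exact le_trans h2 (add_le_add le_rfl h1)
    have htends := tendsto_measure_iInter_atTop (μ := Q) (s := Sn)
      (fun n => (hSmeas n).nullMeasurableSet) hSanti ⟨0, measure_ne_top Q _⟩
    have hDQ : 1 ≤ Q (⋂ n, Sn n) + ENNReal.ofReal (6*((2:ℝ)⁻¹)^r) := by
      have htends2 : Tendsto (fun n => Q (Sn n) + ENNReal.ofReal (6*((2:ℝ)⁻¹)^r)) atTop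
          (nhds (Q (⋂ n, Sn n) + ENNReal.ofReal (6*((2:ℝ)⁻¹)^r))) :=
        htends.add tendsto_const_nhds
      exact ge_of_tendsto' htends2 hSQ
    have hDB : (⋂ n, Sn n) ⊆ Bset := by
      intro ω hω
      have hωn : ∀ n, (2⁻¹:ℝ) ≤ F' n ω := by
        intro n
        have h1 := Set.mem_iInter.mp hω n
        rw [hSF n] at h1
        exact h1.1
      have hXi : ∀ i, μ r ≤ i → (1:ℝ) ≤ X i ω := by
        intro i hi
        by_contra hc
        push_neg at hc
        have hδ : 0 < 1 - X i ω := by linarith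
        obtain ⟨n, hn⟩ := exists_nat_gt ((1 - X i ω)⁻¹ + (i:ℝ))
        have hin : i ≤ n := by
          have h2 : (i:ℝ) < n :=
            lt_of_le_of_lt (le_add_of_nonneg_left (inv_pos.mpr hδ).le) hn
          exact_mod_cast h2.le
        have himem : i ∈ Finset.Icc (μ r) (μ r + n) := Finset.mem_Icc.mpr ⟨hi, by omega⟩
        have hfac := prod_le_single_mem (Finset.Icc (μ r) (μ r + n))
          (fun i' => gk (n+1) (X i' ω)) (fun i' _ => ⟨gk_nonneg _ _, gk_le_one _ _⟩) himem
        have h2 : (2⁻¹:ℝ) ≤ gk (n+1) (X i ω) := by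
          have h3 := hωn n
          rw [hF'eq] at h3
          exact le_trans h3 hfac
        have h3 := ge_of_gk_half (k := n+1) (by omega) h2
        have h4 : (1:ℝ) - X i ω ≤ (2 * ((n:ℝ)+1))⁻¹ := by
          have : ((n+1 : ℕ) : ℝ) = (n:ℝ) + 1 := by push_cast; ring
          rw [this] at h3
          linarith
        have h5 : (2 * ((n:ℝ)+1)) ≤ (1 - X i ω)⁻¹ := by
          have h6 := inv_anti₀ hδ h4
          rwa [inv_inv] at h6
        have h7 : (1 - X i ω)⁻¹ < n := by
          have := Nat.cast_nonneg (α := ℝ) i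
          linarith
        linarith [Nat.cast_nonneg (α := ℝ) n]
      simp only [hBdef, Set.mem_iUnion, Set.mem_iInter, Set.mem_setOf_eq]
      exact ⟨μ r, fun i hi => hXi i hi⟩
    calc (1:ENNReal) ≤ Q (⋂ n, Sn n) + ENNReal.ofReal (6*((2:ℝ)⁻¹)^r) := hDQ
      _ ≤ Q Bset + ENNReal.ofReal (6*((2:ℝ)⁻¹)^r) :=
          add_le_add (measure_mono hDB) le_rfl
  have htendr : Tendsto (fun r : ℕ => Q Bset + ENNReal.ofReal (6*((2:ℝ)⁻¹)^r)) atTop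
      (nhds (Q Bset + 0)) := by
    apply Tendsto.add tendsto_const_nhds
    have h1 : Tendsto (fun r : ℕ => 6*((2:ℝ)⁻¹)^r) atTop (nhds 0) := by
      have h2 : Tendsto (fun r : ℕ => ((2:ℝ)⁻¹)^r) atTop (nhds 0) :=
        tendsto_pow_atTop_nhds_zero_of_lt_one (by norm_num) (by norm_num)
      simpa using h2.const_mul (6:ℝ)
    have h2 := ENNReal.tendsto_ofReal h1
    simpa using h2
  have hev : ∀ᶠ r : ℕ in atTop, 1 ≤ Q Bset + ENNReal.ofReal (6*((2:ℝ)⁻¹)^r) := by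
    filter_upwards [eventually_ge_atTop 1] with r hr
    exact hkey r hr
  have hfin := ge_of_tendsto htendr hev
  rwa [add_zero] at hfin

end
end

section
/- Let $\{X_n\}_{n\ge 1}$ be a sequence of $m$-dependent, linearly stationary random variables in a sub-linear expectation space with $C_{\hat{\mathbb{V}}}(|X_1|) < \infty$, and let $S_n = \sum_{i=1}^n X_i$. Then the limits $\overline{\mu} = \lim_{n\to\infty} \breve{\mathbb{E}}[S_n]/n$ and $\underline{\mu} = \lim_{n\to\infty} \breve{\varepsilon}[S_n]/n$ exist and satisfy $\breve{\varepsilon}[X_1] \le \underline{\mu} \le \overline{\mu} \le \breve{\mathbb{E}}[X_1]$. -/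
open Filter MeasureTheory

noncomputable section

variable {Ω : Type*}

namespace SLEP
open Finset

set_option maxHeartbeats 1000000

/-- clamp -/
def clamp (c x : ℝ) : ℝ := max (-c) (min x c)

lemma clamp_lip (c a b : ℝ) : |clamp c a - clamp c b| ≤ |a - b| := by
  have h1 : |min a c - min b c| ≤ |a - b| := by
    have h := abs_min_sub_min_le_max a c b c
    simp only [sub_self, abs_zero] at h
    exact h.trans (max_le le_rfl (abs_nonneg _))
  calc |clamp c a - clamp c b| = |max (min a c) (-c) - max (min b c) (-c)| := by
        rw [clamp, clamp, max_comm, max_comm (-c)]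
    _ ≤ |min a c - min b c| := abs_max_sub_max_le_abs _ _ _
    _ ≤ |a - b| := h1

lemma abs_clamp_le {c : ℝ} (hc : 0 ≤ c) (x : ℝ) : |clamp c x| ≤ c := by
  rw [abs_le]
  exact ⟨le_max_left _ _ |>.trans' (by linarith), max_le (by linarith) (min_le_right _ _)⟩

lemma clamp_eq_self {e y : ℝ} (h : |y| ≤ e) : clamp e y = y := by
  rw [abs_le] at h
  rw [clamp, min_eq_left h.2, max_eq_right h.1]

lemma clamp_neg {c : ℝ} (hc : 0 ≤ c) (x : ℝ) : clamp c (-x) = -clamp c x := by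
  unfold clamp
  simp only [min_def, max_def]
  split_ifs <;> linarith

lemma abs_sub_clamp_le {c : ℝ} (hc : 0 ≤ c) (a : ℝ) :
    |a - clamp c a| ≤ max (|a| - c) 0 := by
  by_cases h : |a| ≤ c
  · rw [clamp_eq_self h]; simp
  · push_neg at h
    rcases lt_abs.mp h with h1 | h1
    · have ha : 0 ≤ a := le_of_lt (lt_of_le_of_lt hc h1)
      have hcl : clamp c a = c := by
        rw [clamp, min_eq_right h1.le, max_eq_right (by linarith)]
      rw [hcl, abs_of_nonneg ha, abs_of_nonneg (by linarith)]
      exact le_max_left _ _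
    · have ha : a ≤ 0 := by linarith
      have hcl : clamp c a = -c := by
        rw [clamp, min_eq_left (by linarith), max_eq_left (by linarith)]
      rw [hcl, abs_of_nonpos ha]
      have h2 : |a - -c| = -a - c := by rw [abs_of_nonpos (by linarith)]; ring
      rw [h2]; exact le_max_left _ _

lemma abs_clamp_le_abs {c : ℝ} (hc : 0 ≤ c) (a : ℝ) : |clamp c a| ≤ |a| := by
  by_cases h : |a| ≤ c
  · rw [clamp_eq_self h]
  · push_neg at h
    exact (abs_clamp_le hc a).trans h.le

lemma clamp_clamp {c d : ℝ} (hc : 0 ≤ c) (hcd : c ≤ d) (x : ℝ) :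
    clamp c (clamp d x) = clamp c x := by
  unfold clamp
  simp only [min_def, max_def]
  split_ifs <;> linarith

/-- the tail function `min (max (|x| - c) 0) K` -/
def tl (c K x : ℝ) : ℝ := min (max (|x| - c) 0) K

lemma tl_nonneg {c K x : ℝ} (hK : 0 ≤ K) : 0 ≤ tl c K x :=
  le_min (le_max_right _ _) hK

lemma tl_lip (c K a b : ℝ) : |tl c K a - tl c K b| ≤ |a - b| := by
  have h0 : |max (|a| - c) 0 - max (|b| - c) 0| ≤ |a - b| :=
    (abs_max_sub_max_le_abs _ _ _).trans (by
      have h := abs_abs_sub_abs_le_abs_sub a b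
      simpa using h)
  have h := abs_min_sub_min_le_max (max (|a| - c) 0) K (max (|b| - c) 0) K
  simp only [sub_self, abs_zero] at h
  exact h.trans (max_le h0 (abs_nonneg _))

lemma clamp_diff_le {c d : ℝ} (hc : 0 ≤ c) (hcd : c ≤ d) (x : ℝ) :
    |clamp d x - clamp c x| ≤ tl c (d - c) x := by
  have hd : 0 ≤ d := hc.trans hcd
  have key : clamp c x = clamp c (clamp d x) := (clamp_clamp hc hcd x).symm
  rw [key]
  have h1 : |clamp d x - clamp c (clamp d x)| ≤ max (|clamp d x| - c) 0 :=
    abs_sub_clamp_le hc (clamp d x)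
  refine le_min (h1.trans (max_le_max (by
    have := abs_clamp_le_abs hd x; linarith) le_rfl)) (h1.trans ?_)
  have := abs_clamp_le hd x
  exact max_le (by linarith) (by linarith)

lemma min_add_le {u v K : ℝ} (hu : 0 ≤ u) (hv : 0 ≤ v) (hK : 0 ≤ K) :
    min (u + v) K ≤ min u K + min v K := by
  rcases le_total (u + v) K with h | h
  · rw [min_eq_left h, min_eq_left (by linarith), min_eq_left (by linarith)]
  · rw [min_eq_right h]
    rcases le_total u K with h1 | h1
    · rw [min_eq_left h1]
      rcases le_total v K with h2 | h2
      · rw [min_eq_left h2]; linarith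
      · rw [min_eq_right h2]; linarith
    · rw [min_eq_right h1]
      have h3 : 0 ≤ min v K := le_min hv hK
      linarith

lemma clamp_add_key {c : ℝ} (hc : 0 ≤ c) (a b : ℝ) :
    |clamp (2 * c) (a + b) - clamp c a - clamp c b| ≤ tl c (4 * c) a + tl c (4 * c) b := by
  set ca := clamp c a
  set cb := clamp c b
  have hca : |ca| ≤ c := abs_clamp_le hc a
  have hcb : |cb| ≤ c := abs_clamp_le hc b
  have h2c : (0:ℝ) ≤ 2 * c := by linarith
  have f2 : clamp (2 * c) (ca + cb) = ca + cb := by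
    refine clamp_eq_self ?_
    calc |ca + cb| ≤ |ca| + |cb| := abs_add_le _ _
      _ ≤ 2 * c := by linarith
  have f1 : |clamp (2*c) (a+b) - (ca + cb)| ≤ max (|a| - c) 0 + max (|b| - c) 0 := by
    calc |clamp (2*c) (a+b) - (ca + cb)|
        = |clamp (2*c) (a+b) - clamp (2*c) (ca + cb)| := by rw [f2]
      _ ≤ |(a + b) - (ca + cb)| := clamp_lip _ _ _
      _ = |(a - ca) + (b - cb)| := by ring_nf
      _ ≤ |a - ca| + |b - cb| := abs_add_le _ _
      _ ≤ max (|a| - c) 0 + max (|b| - c) 0 :=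
          add_le_add (abs_sub_clamp_le hc a) (abs_sub_clamp_le hc b)
  have f3 : |clamp (2*c) (a+b) - (ca + cb)| ≤ 4 * c := by
    have h1 := abs_clamp_le h2c (a + b)
    rw [abs_le] at h1 hca hcb ⊢
    constructor <;> [linarith; linarith]
  have f4 : |clamp (2*c) (a+b) - (ca + cb)| ≤ min (max (|a| - c) 0 + max (|b| - c) 0) (4*c) :=
    le_min f1 f3
  calc |clamp (2*c) (a+b) - ca - cb| = |clamp (2*c) (a+b) - (ca + cb)| := by ring_nf
    _ ≤ min (max (|a| - c) 0 + max (|b| - c) 0) (4*c) := f4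
    _ ≤ min (max (|a| - c) 0) (4*c) + min (max (|b| - c) 0) (4*c) :=
        min_add_le (le_max_right _ _) (le_max_right _ _) (by linarith)
    _ = tl c (4*c) a + tl c (4*c) b := rfl

end SLEP
namespace SLEP

variable {Ω : Type*} (S : SLE Ω)

/-- composition with a Lipschitz real function stays in `H` -/
lemma mem_comp1 {L : ℝ} (hL : 0 ≤ L) {f : ℝ → ℝ} (hf : ∀ a b, |f a - f b| ≤ L * |a - b|)
    {Y : Ω → ℝ} (hY : Y ∈ S.H) : (fun ω => f (Y ω)) ∈ S.H := by
  have h := S.comp_mem 1 (fun x => f (x 0)) ?_ (fun _ => Y) (fun _ => hY)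
  · exact h
  · refine ⟨L + 1, by linarith, 0, fun x y => ?_⟩
    have h1 : |x 0 - y 0| ≤ ‖x - y‖ := by
      have h2 := norm_le_pi_norm (x - y) 0
      simpa [Real.norm_eq_abs] using h2
    have h3 := hf (x 0) (y 0)
    have h4 : (0:ℝ) ≤ ‖x - y‖ := norm_nonneg _
    simp only [pow_zero]
    nlinarith [abs_nonneg (x 0 - y 0)]

lemma mem_add {A B : Ω → ℝ} (hA : A ∈ S.H) (hB : B ∈ S.H) :
    (fun ω => A ω + B ω) ∈ S.H := by
  have h := S.comp_mem 2 (fun x => x 0 + x 1) ?_ ![A, B] ?_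
  · convert h using 2; rfl
  · refine ⟨1, one_pos, 0, fun x y => ?_⟩
    have h0 : |x 0 - y 0| ≤ ‖x - y‖ := by
      have := norm_le_pi_norm (x - y) 0; simpa [Real.norm_eq_abs] using this
    have h1 : |x 1 - y 1| ≤ ‖x - y‖ := by
      have := norm_le_pi_norm (x - y) 1; simpa [Real.norm_eq_abs] using this
    have h2 : |x 0 + x 1 - (y 0 + y 1)| ≤ |x 0 - y 0| + |x 1 - y 1| := by
      have := abs_add_le (x 0 - y 0) (x 1 - y 1); rw [show x 0 + x 1 - (y 0 + y 1) = x 0 - y 0 + (x 1 - y 1) by ring]; exact this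
    simp only [pow_zero]
    nlinarith [norm_nonneg (x - y)]
  · intro i
    fin_cases i <;> simpa

lemma mem_sum (f : ℕ → Ω → ℝ) (hf : ∀ i, f i ∈ S.H) (n : ℕ) :
    (fun ω => ∑ i ∈ Finset.range n, f i ω) ∈ S.H := by
  have h := S.comp_mem n (fun x => ∑ i, x i) ?_ (fun i => f i.val) (fun i => hf i.val)
  · convert h using 1
    funext ω
    exact (Fin.sum_univ_eq_sum_range (fun i => f i ω) n).symm
  · refine ⟨n + 1, by positivity, 0, fun x y => ?_⟩
    have h1 : |∑ i, x i - ∑ i, y i| ≤ (n : ℝ) * ‖x - y‖ := by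
      rw [← Finset.sum_sub_distrib]
      refine (Finset.abs_sum_le_sum_abs _ _).trans ?_
      have h2 : ∀ i : Fin n, |x i - y i| ≤ ‖x - y‖ := fun i => by
        have := norm_le_pi_norm (x - y) i; simpa [Real.norm_eq_abs] using this
      calc ∑ i, |x i - y i| ≤ ∑ _i : Fin n, ‖x - y‖ := Finset.sum_le_sum fun i _ => h2 i
        _ = (n : ℝ) * ‖x - y‖ := by simp [mul_comm]
    simp only [pow_zero]
    nlinarith [norm_nonneg (x - y), Nat.cast_nonneg (α := ℝ) n]

lemma E_nonneg {Y : Ω → ℝ} (hY : Y ∈ S.H) (h : ∀ ω, 0 ≤ Y ω) : 0 ≤ S.E Y := by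
  have := S.mono (fun _ => 0) Y (S.const_mem 0) hY h
  rwa [S.isConst 0] at this

/-- E of a finite sum is subadditive -/
lemma E_sum_le (f : ℕ → Ω → ℝ) (hf : ∀ i, f i ∈ S.H) (n : ℕ) :
    S.E (fun ω => ∑ i ∈ Finset.range n, f i ω) ≤ ∑ i ∈ Finset.range n, S.E (f i) := by
  induction n with
  | zero => simp [S.isConst 0]
  | succ n ih =>
    have h1 : S.E (fun ω => ∑ i ∈ Finset.range (n+1), f i ω)
        = S.E (fun ω => (∑ i ∈ Finset.range n, f i ω) + f n ω) := by
      congr 1; funext ω; rw [Finset.sum_range_succ]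
    rw [h1, Finset.sum_range_succ]
    calc S.E (fun ω => (∑ i ∈ Finset.range n, f i ω) + f n ω)
        ≤ S.E (fun ω => ∑ i ∈ Finset.range n, f i ω) + S.E (f n) :=
          S.subadd _ _ (mem_sum S f hf n) (hf n)
      _ ≤ ∑ i ∈ Finset.range n, S.E (f i) + S.E (f n) := by linarith

end SLEP
namespace SLEP
open Finset

/-- telescoping: sum of unit tails -/
lemma sum_unit_tail (u : ℝ) (N : ℕ) :
    ∑ k ∈ range N, min (max (u - k) 0) 1 = min (max u 0) N := by
  induction N with
  | zero => simp
  | succ N ih =>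
    rw [Finset.sum_range_succ, ih]
    push_cast
    rcases le_total u (N:ℝ) with h | h
    · have h2 : max u 0 ≤ (N:ℝ) := max_le h (Nat.cast_nonneg N)
      rw [max_eq_right (sub_nonpos.2 h), min_eq_left h2,
          min_eq_left (h2.trans (by linarith)), min_eq_left (zero_le_one' ℝ)]
      ring
    · have h0 : (0:ℝ) ≤ u := le_trans (Nat.cast_nonneg N) h
      rw [max_eq_left h0, min_eq_right h, max_eq_left (by linarith : (0:ℝ) ≤ u - N)]
      rcases le_total u ((N:ℝ)+1) with h1 | h1
      · rw [min_eq_left (by linarith), min_eq_left h1]; ring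
      · rw [min_eq_right (by linarith), min_eq_right h1]

lemma tl_le_sum_unit {b K x : ℝ} (hK : 0 ≤ K) :
    tl b K x ≤ ∑ k ∈ range ⌈K⌉₊, tl (b + k) 1 x := by
  have h1 : ∀ k : ℕ, tl (b + k) 1 x = min (max ((|x| - b) - k) 0) 1 := by
    intro k; unfold tl; ring_nf
  simp only [h1]
  rw [sum_unit_tail (|x| - b) ⌈K⌉₊]
  exact min_le_min le_rfl (Nat.le_ceil K)

lemma min_sum_le {K : ℝ} (hK : 0 ≤ K) (u : ℕ → ℝ) (hu : ∀ i, 0 ≤ u i) (n : ℕ) :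
    min (∑ i ∈ range n, u i) K ≤ ∑ i ∈ range n, min (u i) K := by
  induction n with
  | zero => simp [hK]
  | succ n ih =>
    rw [Finset.sum_range_succ, Finset.sum_range_succ]
    calc min ((∑ i ∈ range n, u i) + u n) K
        ≤ min (∑ i ∈ range n, u i) K + min (u n) K :=
          min_add_le (Finset.sum_nonneg fun i _ => hu i) (hu n) hK
      _ ≤ (∑ i ∈ range n, min (u i) K) + min (u n) K := by linarith

/-- decomposition of the tail of a sum -/
lemma tl_sum_le {c K : ℝ} (hK : 0 ≤ K) (hc : 0 ≤ c) {n : ℕ} (hn : 1 ≤ n) (x : ℕ → ℝ) :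
    tl c K (∑ i ∈ range n, x i) ≤ ∑ i ∈ range n, tl (c / n) K (x i) := by
  have hn' : (0:ℝ) < n := by exact_mod_cast hn
  have h1 : max (|∑ i ∈ range n, x i| - c) 0 ≤ ∑ i ∈ range n, max (|x i| - c / n) 0 := by
    refine max_le ?_ (Finset.sum_nonneg fun i _ => le_max_right _ _)
    have h2 : |∑ i ∈ range n, x i| ≤ ∑ i ∈ range n, |x i| := Finset.abs_sum_le_sum_abs _ _
    have h3 : ∑ i ∈ range n, (|x i| - c / n) = (∑ i ∈ range n, |x i|) - c := by
      rw [Finset.sum_sub_distrib]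
      congr 1
      rw [Finset.sum_const, Finset.card_range, nsmul_eq_mul]
      field_simp
    calc |∑ i ∈ range n, x i| - c ≤ (∑ i ∈ range n, |x i|) - c := by linarith
      _ = ∑ i ∈ range n, (|x i| - c / n) := h3.symm
      _ ≤ ∑ i ∈ range n, max (|x i| - c / n) 0 :=
          Finset.sum_le_sum fun i _ => le_max_left _ _
  calc tl c K (∑ i ∈ range n, x i)
      ≤ min (∑ i ∈ range n, max (|x i| - c / n) 0) K := min_le_min h1 le_rfl
    _ ≤ ∑ i ∈ range n, min (max (|x i| - c / n) 0) K :=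
        min_sum_le hK _ (fun i => le_max_right _ _) n
    _ = ∑ i ∈ range n, tl (c / n) K (x i) := rfl

variable {Ω : Type*} (S : SLE Ω)

lemma hatV_mem_one (A : Set Ω) : (1:ℝ) ∈
    {r | ∃ ξ ∈ S.H, (∀ ω, Set.indicator A (fun _ => (1 : ℝ)) ω ≤ ξ ω) ∧ S.E ξ = r} := by
  refine ⟨fun _ => 1, S.const_mem 1, fun ω => ?_, S.isConst 1⟩
  exact Set.indicator_le_self' (fun _ _ => zero_le_one) ω |>.trans le_rfl

lemma hatV_bddBelow (A : Set Ω) : BddBelow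
    {r | ∃ ξ ∈ S.H, (∀ ω, Set.indicator A (fun _ => (1 : ℝ)) ω ≤ ξ ω) ∧ S.E ξ = r} := by
  refine ⟨0, fun r hr => ?_⟩
  obtain ⟨ξ, hξ, hle, hE⟩ := hr
  rw [← hE]
  refine E_nonneg S hξ fun ω => ?_
  exact le_trans (Set.indicator_nonneg (fun _ _ => zero_le_one) ω) (hle ω)

lemma hatV_nonneg (A : Set Ω) : 0 ≤ hatV S A := by
  refine le_csInf ⟨1, hatV_mem_one S A⟩ fun r hr => ?_
  obtain ⟨ξ, hξ, hle, hE⟩ := hr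
  rw [← hE]
  exact E_nonneg S hξ fun ω =>
    le_trans (Set.indicator_nonneg (fun _ _ => zero_le_one) ω) (hle ω)

lemma hatV_mono {A B : Set Ω} (h : A ⊆ B) : hatV S A ≤ hatV S B := by
  refine csInf_le_csInf (hatV_bddBelow S A) ⟨1, hatV_mem_one S B⟩ ?_
  rintro r ⟨ξ, hξ, hle, hE⟩
  exact ⟨ξ, hξ, fun ω =>
    (Set.indicator_le_indicator_of_subset h (fun _ => zero_le_one) ω).trans (hle ω), hE⟩

lemma E_le_hatV {f : Ω → ℝ} (hf : f ∈ S.H) {A : Set Ω}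
    (h : ∀ ω, f ω ≤ Set.indicator A (fun _ => (1 : ℝ)) ω) : S.E f ≤ hatV S A := by
  refine le_csInf ⟨1, hatV_mem_one S A⟩ fun r hr => ?_
  obtain ⟨ξ, hξ, hle, hE⟩ := hr
  rw [← hE]
  exact S.mono f ξ hf hξ fun ω => (h ω).trans (hle ω)

end SLEP
namespace SLEP
open Finset MeasureTheory Filter

/-- From an antitone, nonnegative, integrable-on-`Ioi 0` function `V`,
produce an error bound `Err` for sums `∑_{k<N} V (b+k)` tending to `0`. -/
lemma tail_machinery {V : ℝ → ℝ} (hmono : ∀ s t : ℝ, s ≤ t → V t ≤ V s)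
    (hnn : ∀ t, 0 ≤ V t) (hint : IntegrableOn V (Set.Ioi (0:ℝ))) :
    ∃ Err : ℝ → ℝ, Tendsto Err atTop (nhds 0) ∧
      ∀ b : ℝ, 1 ≤ b → ∀ N : ℕ, ∑ k ∈ range N, V (b + k) ≤ Err b := by
  set W : ℕ → ℝ := fun m => ∫ t in Set.Ioc (m:ℝ) ((m:ℝ)+1), V t with hW
  have hsub : ∀ m : ℕ, Set.Ioc (m:ℝ) ((m:ℝ)+1) ⊆ Set.Ioi (0:ℝ) := by
    intro m t ht
    exact lt_of_le_of_lt (Nat.cast_nonneg m) ht.1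
  have hWint : ∀ m : ℕ, IntegrableOn V (Set.Ioc (m:ℝ) ((m:ℝ)+1)) :=
    fun m => hint.mono_set (hsub m)
  have hWnn : ∀ m : ℕ, 0 ≤ W m := fun m =>
    setIntegral_nonneg measurableSet_Ioc fun t _ => hnn t
  have hVleW : ∀ m : ℕ, V ((m:ℝ) + 1) ≤ W m := by
    intro m
    have h1 : ∫ t in Set.Ioc (m:ℝ) ((m:ℝ)+1), (fun _ => V ((m:ℝ)+1)) t
        ≤ ∫ t in Set.Ioc (m:ℝ) ((m:ℝ)+1), V t := by
      refine setIntegral_mono_on ((integrableOn_const_iff).2 (Or.inr ?_)) (hWint m)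
        measurableSet_Ioc fun t ht => hmono t ((m:ℝ)+1) ht.2
      rw [Real.volume_Ioc]
      exact ENNReal.ofReal_lt_top
    rwa [setIntegral_const, measureReal_def, Real.volume_Ioc, add_sub_cancel_left,
      ENNReal.toReal_ofReal zero_le_one, one_smul] at h1
  have hWsum : Summable W := by
    refine summable_of_sum_range_le (c := ∫ t in Set.Ioi (0:ℝ), V t) hWnn fun n => ?_
    have hii : ∀ k < n, IntervalIntegrable V volume (k:ℝ) ((k:ℝ)+1) := by
      intro k _
      rw [intervalIntegrable_iff_integrableOn_Ioc_of_le (by linarith)]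
      exact hWint k
    have h2 : ∑ k ∈ range n, ∫ t in (k:ℝ)..((k:ℝ)+1), V t = ∫ t in (0:ℝ)..(n:ℝ), V t := by
      have := intervalIntegral.sum_integral_adjacent_intervals (a := fun k : ℕ => (k:ℝ))
        (f := V) (μ := volume) (n := n) (by intro k hk; push_cast; exact hii k hk)
      push_cast at this ⊢
      convert this using 2
    have h3 : ∀ k : ℕ, W k = ∫ t in (k:ℝ)..((k:ℝ)+1), V t := by
      intro k
      rw [intervalIntegral.integral_of_le (by linarith)]
    calc ∑ k ∈ range n, W k = ∫ t in (0:ℝ)..(n:ℝ), V t := by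
          rw [← h2]; exact Finset.sum_congr rfl fun k _ => h3 k
      _ = ∫ t in Set.Ioc (0:ℝ) (n:ℝ), V t := intervalIntegral.integral_of_le (Nat.cast_nonneg n)
      _ ≤ ∫ t in Set.Ioi (0:ℝ), V t := by
          refine setIntegral_mono_set hint (Filter.Eventually.of_forall fun t => hnn t) ?_
          exact (Set.Ioc_subset_Ioi_self).eventuallyLE
  refine ⟨fun b => ∑' k, W (⌊b⌋₊ - 1 + k), ?_, ?_⟩
  · have hT : Tendsto (fun m : ℕ => ∑' k, W (m + k)) atTop (nhds 0) := by
      have h := tendsto_sum_nat_add W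
      refine h.congr fun m => tsum_congr fun k => by rw [add_comm]
    have hfl : Tendsto (fun b : ℝ => ⌊b⌋₊ - 1) atTop atTop := by
      have h1 : Tendsto (fun n : ℕ => n - 1) atTop atTop :=
        tendsto_atTop_atTop.2 fun N => ⟨N + 1, fun n hn => by omega⟩
      exact h1.comp tendsto_nat_floor_atTop
    exact hT.comp hfl
  · intro b hb N
    have hb0 : (0:ℝ) ≤ b := by linarith
    have hfl1 : 1 ≤ ⌊b⌋₊ := Nat.le_floor (by exact_mod_cast hb)
    set m := ⌊b⌋₊ - 1 with hm
    have hm1 : ⌊b⌋₊ = m + 1 := by omega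
    have step : ∀ k : ℕ, V (b + k) ≤ W (m + k) := by
      intro k
      have h1 : ((m + k : ℕ):ℝ) + 1 ≤ b + k := by
        push_cast
        have := Nat.floor_le hb0
        rw [hm1] at this
        push_cast at this
        linarith
      calc V (b + k) ≤ V (((m + k : ℕ):ℝ) + 1) := hmono _ _ h1
        _ ≤ W (m + k) := hVleW (m + k)
    calc ∑ k ∈ range N, V (b + k) ≤ ∑ k ∈ range N, W (m + k) :=
          Finset.sum_le_sum fun k _ => step k
      _ ≤ ∑' k, W (m + k) := by
          refine Summable.sum_le_tsum (range N) (fun k _ => hWnn _) ?_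
          exact ((summable_nat_add_iff m).2 hWsum).congr fun k => by rw [add_comm]

end SLEP
namespace SLEP
open Finset Filter

variable {Ω : Type*} (S : SLE Ω)

lemma trunc_eq_clamp (c : ℝ) (Y : Ω → ℝ) : trunc c Y = fun ω => clamp c (Y ω) := rfl

lemma mem_trunc {Y : Ω → ℝ} (hY : Y ∈ S.H) (c : ℝ) : trunc c Y ∈ S.H := by
  rw [trunc_eq_clamp]
  exact mem_comp1 S zero_le_one (fun a b => by simpa using clamp_lip c a b) hY

lemma mem_tl {Y : Ω → ℝ} (hY : Y ∈ S.H) (c K : ℝ) :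
    (fun ω => tl c K (Y ω)) ∈ S.H :=
  mem_comp1 S zero_le_one (fun a b => by simpa using tl_lip c K a b) hY

lemma E_trunc_diff {Y : Ω → ℝ} (hY : Y ∈ S.H) {c d : ℝ} (hc : 0 ≤ c) (hcd : c ≤ d) :
    |S.E (trunc d Y) - S.E (trunc c Y)| ≤ S.E (fun ω => tl c (d - c) (Y ω)) := by
  have hTd := mem_trunc S hY d
  have hTc := mem_trunc S hY c
  have hT := mem_tl S hY c (d - c)
  have h1 : S.E (trunc d Y) ≤ S.E (trunc c Y) + S.E (fun ω => tl c (d-c) (Y ω)) := by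
    refine le_trans (S.mono _ (fun ω => trunc c Y ω + tl c (d-c) (Y ω)) hTd
      (mem_add S hTc hT) fun ω => ?_) (S.subadd _ _ hTc hT)
    have := (abs_le.1 (clamp_diff_le hc hcd (Y ω))).2
    simp only [trunc_eq_clamp]
    linarith
  have h2 : S.E (trunc c Y) ≤ S.E (trunc d Y) + S.E (fun ω => tl c (d-c) (Y ω)) := by
    refine le_trans (S.mono _ (fun ω => trunc d Y ω + tl c (d-c) (Y ω)) hTc
      (mem_add S hTd hT) fun ω => ?_) (S.subadd _ _ hTd hT)
    have := (abs_le.1 (clamp_diff_le hc hcd (Y ω))).1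
    simp only [trunc_eq_clamp]
    linarith
  rw [abs_le]
  constructor <;> linarith

/-- Existence of the truncated-expectation limit, via the Cauchy criterion. -/
lemma exists_trunc_lim {Y : Ω → ℝ} (hY : Y ∈ S.H) {B : ℝ → ℝ} {c₁ : ℝ} (hc₁ : 0 ≤ c₁)
    (hB : Tendsto B atTop (nhds 0))
    (htail : ∀ c, c₁ ≤ c → ∀ K, 0 ≤ K → S.E (fun ω => tl c K (Y ω)) ≤ B c) :
    ∃ L, Tendsto (fun c => S.E (trunc c Y)) atTop (nhds L) := by
  set F := fun c => S.E (trunc c Y) with hF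
  rw [← cauchy_map_iff_exists_tendsto]
  rw [Metric.cauchy_iff]
  refine ⟨map_neBot, fun ε hε => ?_⟩
  have hev : ∀ᶠ c in atTop, B c < ε := by
    have := hB.eventually (gt_mem_nhds hε)
    exact this
  obtain ⟨c₂, hc₂⟩ := (hev.and (eventually_ge_atTop c₁)).exists_forall_of_atTop
  refine ⟨F '' Set.Ici c₂, image_mem_map (Ici_mem_atTop c₂), ?_⟩
  rintro x ⟨c, hc, rfl⟩ y ⟨d, hd, rfl⟩
  have key : ∀ u v : ℝ, c₂ ≤ u → u ≤ v → dist (F u) (F v) < ε := by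
    intro u v hu huv
    have h1 : c₁ ≤ u := (hc₂ u hu).2
    rw [Real.dist_eq, abs_sub_comm]
    calc |F v - F u| ≤ S.E (fun ω => tl u (v - u) (Y ω)) :=
          E_trunc_diff S hY (hc₁.trans h1) huv
      _ ≤ B u := htail u h1 (v - u) (by linarith)
      _ < ε := (hc₂ u hu).1
  rcases le_total c d with h | h
  · exact key c d hc h
  · rw [dist_comm]; exact key d c hd h

/-- Subadditivity of truncated-expectation limits. -/
lemma lim_add_le {A B : Ω → ℝ} (hA : A ∈ S.H) (hB : B ∈ S.H)
    {BA BB : ℝ → ℝ} {cA cB : ℝ} (hcA : 0 ≤ cA) (hcB : 0 ≤ cB)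
    (hBA : Tendsto BA atTop (nhds 0)) (hBB : Tendsto BB atTop (nhds 0))
    (htailA : ∀ c, cA ≤ c → ∀ K, 0 ≤ K → S.E (fun ω => tl c K (A ω)) ≤ BA c)
    (htailB : ∀ c, cB ≤ c → ∀ K, 0 ≤ K → S.E (fun ω => tl c K (B ω)) ≤ BB c)
    {LA LB LAB : ℝ}
    (hLA : Tendsto (fun c => S.E (trunc c A)) atTop (nhds LA))
    (hLB : Tendsto (fun c => S.E (trunc c B)) atTop (nhds LB))
    (hLAB : Tendsto (fun c => S.E (trunc c (fun ω => A ω + B ω))) atTop (nhds LAB)) :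
    LAB ≤ LA + LB := by
  have h2 : Tendsto (fun c : ℝ => 2 * c) atTop atTop :=
    Tendsto.const_mul_atTop two_pos tendsto_id
  have hg : Tendsto (fun c => S.E (trunc (2*c) (fun ω => A ω + B ω))) atTop (nhds LAB) :=
    hLAB.comp h2
  have hrhs : Tendsto (fun c => S.E (trunc c A) + S.E (trunc c B) +
      S.E (fun ω => tl c (4*c) (A ω)) + S.E (fun ω => tl c (4*c) (B ω))) atTop
      (nhds (LA + LB + 0 + 0)) := by
    refine Tendsto.add (Tendsto.add (hLA.add hLB) ?_) ?_
    · -- squeeze: 0 ≤ E tl ≤ BA c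
      refine squeeze_zero' ?_ ?_ hBA
      · filter_upwards [eventually_ge_atTop (0:ℝ)] with c hc
        exact E_nonneg S (mem_tl S hA c (4*c)) fun ω => tl_nonneg (by linarith)
      · filter_upwards [eventually_ge_atTop cA] with c hc
        exact htailA c hc (4*c) (by linarith [hcA.trans hc])
    · refine squeeze_zero' ?_ ?_ hBB
      · filter_upwards [eventually_ge_atTop (0:ℝ)] with c hc
        exact E_nonneg S (mem_tl S hB c (4*c)) fun ω => tl_nonneg (by linarith)
      · filter_upwards [eventually_ge_atTop cB] with c hc
        exact htailB c hc (4*c) (by linarith [hcB.trans hc])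
  rw [add_zero, add_zero] at hrhs
  refine le_of_tendsto_of_tendsto hg hrhs ?_
  filter_upwards [eventually_ge_atTop (0:ℝ), eventually_ge_atTop cA,
    eventually_ge_atTop cB] with c hc0 _ _
  -- pointwise inequality then E-subadditivity
  have hmemA := mem_trunc S hA c
  have hmemB := mem_trunc S hB c
  have hmemtA := mem_tl S hA c (4*c)
  have hmemtB := mem_tl S hB c (4*c)
  have hpt : ∀ ω, trunc (2*c) (fun ω => A ω + B ω) ω ≤
      trunc c A ω + trunc c B ω + tl c (4*c) (A ω) + tl c (4*c) (B ω) := by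
    intro ω
    have h := (abs_le.1 (clamp_add_key hc0 (A ω) (B ω))).2
    simp only [trunc_eq_clamp]
    linarith
  calc S.E (trunc (2*c) (fun ω => A ω + B ω))
      ≤ S.E (fun ω => (trunc c A ω + trunc c B ω + tl c (4*c) (A ω)) + tl c (4*c) (B ω)) :=
        S.mono _ _ (mem_trunc S (mem_add S hA hB) (2*c))
          (mem_add S (mem_add S (mem_add S hmemA hmemB) hmemtA) hmemtB) hpt
    _ ≤ S.E (fun ω => trunc c A ω + trunc c B ω + tl c (4*c) (A ω)) +
          S.E (fun ω => tl c (4*c) (B ω)) :=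
        S.subadd _ _ (mem_add S (mem_add S hmemA hmemB) hmemtA) hmemtB
    _ ≤ S.E (fun ω => trunc c A ω + trunc c B ω) + S.E (fun ω => tl c (4*c) (A ω)) +
          S.E (fun ω => tl c (4*c) (B ω)) := by
        have := S.subadd _ _ (mem_add S hmemA hmemB) hmemtA
        linarith
    _ ≤ S.E (trunc c A) + S.E (trunc c B) + S.E (fun ω => tl c (4*c) (A ω)) +
          S.E (fun ω => tl c (4*c) (B ω)) := by
        have := S.subadd _ _ hmemA hmemB
        linarith

end SLEP
namespace SLEP
open Finset Filter

lemma tl_neg (c K x : ℝ) : tl c K (-x) = tl c K x := by simp [tl]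

lemma abs_clamp_le_abs_self (c x : ℝ) : |clamp c x| ≤ |c| := by
  rcases le_total 0 c with h | h
  · rw [abs_of_nonneg h]; exact abs_clamp_le h x
  · have h1 : clamp c x = -c := by
      rw [clamp, max_eq_left ((min_le_right x c).trans (by linarith))]
    rw [h1, abs_neg]

variable {Ω : Type*} (S : SLE Ω) {X : ℕ → Ω → ℝ}

lemma lip1_of_abs {f : ℝ → ℝ} (h : ∀ a b, |f a - f b| ≤ |a - b|) : LipschitzWith 1 f :=
  LipschitzWith.of_dist_le_mul fun a b => by
    rw [Real.dist_eq, Real.dist_eq]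
    simpa using h a b

lemma stat_apply (hstat : LinStat S X) (p : ℕ) {f : ℝ → ℝ}
    (hlip : ∀ a b, |f a - f b| ≤ |a - b|) (hbd : ∃ M, ∀ x, |f x| ≤ M) :
    S.E (fun ω => f (X p ω)) = S.E (fun ω => f (X 0 ω)) := by
  have h := hstat 1 le_rfl p f ⟨1, lip1_of_abs hlip⟩ hbd
  simp only [Finset.sum_range_one, add_zero] at h
  exact h.symm

lemma E_psi_le (hH : ∀ i, X i ∈ S.H) (hstat : LinStat S X) (i : ℕ) (t : ℝ) :
    S.E (fun ω => tl t 1 (X i ω)) ≤ hatV S {ω | t ≤ |X 0 ω|} := by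
  have hbd : ∃ M, ∀ x, |tl t 1 x| ≤ M :=
    ⟨1, fun x => by rw [abs_of_nonneg (tl_nonneg zero_le_one)]; exact min_le_right _ _⟩
  rw [stat_apply S hstat i (fun a b => tl_lip t 1 a b) hbd]
  refine E_le_hatV S (mem_tl S (hH 0) t 1) fun ω => ?_
  by_cases hω : t ≤ |X 0 ω|
  · rw [Set.indicator_of_mem (show ω ∈ {ω | t ≤ |X 0 ω|} from hω)]
    exact min_le_right _ _
  · rw [Set.indicator_of_notMem (show ω ∉ {ω | t ≤ |X 0 ω|} from hω)]
    push_neg at hω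
    unfold tl
    rw [max_eq_right (by linarith)]
    simp

lemma E_tl_single (hH : ∀ i, X i ∈ S.H) (hstat : LinStat S X) {Err : ℝ → ℝ}
    (hErr : ∀ b : ℝ, 1 ≤ b → ∀ N : ℕ, ∑ k ∈ range N, hatV S {ω | b + k ≤ |X 0 ω|} ≤ Err b)
    (i : ℕ) {b K : ℝ} (hb : 1 ≤ b) (hK : 0 ≤ K) :
    S.E (fun ω => tl b K (X i ω)) ≤ Err b := by
  calc S.E (fun ω => tl b K (X i ω))
      ≤ S.E (fun ω => ∑ k ∈ range ⌈K⌉₊, tl (b + k) 1 (X i ω)) :=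
        S.mono _ _ (mem_tl S (hH i) b K)
          (mem_sum S (fun k ω => tl (b + k) 1 (X i ω))
            (fun k => mem_tl S (hH i) (b + k) 1) _) (fun ω => tl_le_sum_unit hK)
    _ ≤ ∑ k ∈ range ⌈K⌉₊, S.E (fun ω => tl (b + k) 1 (X i ω)) :=
        E_sum_le S _ (fun k => mem_tl S (hH i) (b + k) 1) _
    _ ≤ ∑ k ∈ range ⌈K⌉₊, hatV S {ω | b + k ≤ |X 0 ω|} :=
        Finset.sum_le_sum fun k _ => E_psi_le S hH hstat i (b + k)
    _ ≤ Err b := hErr b hb _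

lemma E_tl_block (hH : ∀ i, X i ∈ S.H) (hstat : LinStat S X) {Err : ℝ → ℝ}
    (hErr : ∀ b : ℝ, 1 ≤ b → ∀ N : ℕ, ∑ k ∈ range N, hatV S {ω | b + k ≤ |X 0 ω|} ≤ Err b)
    (p : ℕ) {n : ℕ} (hn : 1 ≤ n) {c K : ℝ} (hc : (n:ℝ) ≤ c) (hK : 0 ≤ K) :
    S.E (fun ω => tl c K (∑ i ∈ range n, X (p + i) ω)) ≤ n * Err (c / n) := by
  have hn' : (0:ℝ) < n := by exact_mod_cast hn
  have hc0 : 0 ≤ c := le_trans hn'.le hc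
  have hcn : 1 ≤ c / n := (one_le_div hn').2 hc
  have hmem : ∀ i : ℕ, (fun ω => tl (c / n) K (X (p + i) ω)) ∈ S.H :=
    fun i => mem_tl S (hH (p + i)) (c / n) K
  calc S.E (fun ω => tl c K (∑ i ∈ range n, X (p + i) ω))
      ≤ S.E (fun ω => ∑ i ∈ range n, tl (c / n) K (X (p + i) ω)) :=
        S.mono _ _
          (mem_tl S (mem_sum S (fun i ω => X (p + i) ω) (fun i => hH (p + i)) n) c K)
          (mem_sum S _ hmem n)
          (fun ω => tl_sum_le hK hc0 hn (fun i => X (p + i) ω))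
    _ ≤ ∑ i ∈ range n, S.E (fun ω => tl (c / n) K (X (p + i) ω)) :=
        E_sum_le S _ hmem n
    _ ≤ ∑ _i ∈ range n, Err (c / n) :=
        Finset.sum_le_sum fun i _ => E_tl_single S hH hstat hErr (p + i) hcn hK
    _ = n * Err (c / n) := by rw [Finset.sum_const, Finset.card_range, nsmul_eq_mul]

end SLEP

open SLEP in
/-- Existence of the mean limits `μ̄ = lim Ĕ[Sₙ]/n`, `μ̲ = lim ĕ[Sₙ]/n` for
`m`-dependent, linearly stationary sequences with finite Choquet expectation. -/
theorem mean_limits_mdep_linstat (S : SLE Ω) (m : ℕ) (X : ℕ → Ω → ℝ)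
    (hH : ∀ i, X i ∈ S.H) (hdep : MDep S m X) (hstat : LinStat S X)
    (hchoquet : IntegrableOn (fun t => hatV S {ω | t ≤ |X 0 ω|}) (Set.Ioi (0 : ℝ))) :
    ∃ (ES es : ℕ → ℝ) (E1 e1 μb μl : ℝ),
      (∀ n : ℕ, Tendsto
        (fun c : ℝ => S.E (trunc c (fun ω => ∑ i ∈ Finset.range n, X i ω)))
        atTop (nhds (ES n))) ∧
      (∀ n : ℕ, Tendsto
        (fun c : ℝ => -S.E (trunc c (fun ω => -∑ i ∈ Finset.range n, X i ω)))
        atTop (nhds (es n))) ∧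
      Tendsto (fun c : ℝ => S.E (trunc c (X 0))) atTop (nhds E1) ∧
      Tendsto (fun c : ℝ => -S.E (trunc c (fun ω => -X 0 ω))) atTop (nhds e1) ∧
      Tendsto (fun n : ℕ => ES n / n) atTop (nhds μb) ∧
      Tendsto (fun n : ℕ => es n / n) atTop (nhds μl) ∧
      e1 ≤ μl ∧ μl ≤ μb ∧ μb ≤ E1 := by
  clear hdep
  classical
  obtain ⟨Err, hErr0, hErrB⟩ := SLEP.tail_machinery
    (V := fun t => hatV S {ω | t ≤ |X 0 ω|})
    (fun s t hst => hatV_mono S fun ω (h : t ≤ |X 0 ω|) => hst.trans h)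
    (fun t => hatV_nonneg S _) hchoquet
  set Sn : ℕ → Ω → ℝ := fun n ω => ∑ i ∈ Finset.range n, X i ω with hSndef
  have hSnH : ∀ n, Sn n ∈ S.H := fun n => SLEP.mem_sum S X hH n
  have hnegH : ∀ n, (fun ω => -Sn n ω) ∈ S.H := fun n =>
    SLEP.mem_comp1 S zero_le_one (fun a b => by
      rw [one_mul, show -a - -b = -(a - b) by ring, abs_neg]) (hSnH n)
  -- tail bounds
  have htail : ∀ n : ℕ, 1 ≤ n → ∀ c, (n:ℝ) ≤ c → ∀ K, 0 ≤ K →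
      S.E (fun ω => tl c K (Sn n ω)) ≤ n * Err (c / n) := by
    intro n hn c hc K hK
    have h := SLEP.E_tl_block S hH hstat hErrB 0 hn hc hK
    simpa using h
  have htailneg : ∀ n : ℕ, 1 ≤ n → ∀ c, (n:ℝ) ≤ c → ∀ K, 0 ≤ K →
      S.E (fun ω => tl c K (-Sn n ω)) ≤ n * Err (c / n) := by
    intro n hn c hc K hK
    have he : (fun ω => tl c K (-Sn n ω)) = (fun ω => tl c K (Sn n ω)) := by
      funext ω; rw [SLEP.tl_neg]
    rw [he]; exact htail n hn c hc K hK
  have hBtend : ∀ n : ℕ, 1 ≤ n → Tendsto (fun c : ℝ => (n:ℝ) * Err (c / n)) atTop (nhds 0) := by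
    intro n hn
    have hn' : (0:ℝ) < n := by exact_mod_cast hn
    have h1 : Tendsto (fun c : ℝ => c / n) atTop atTop := tendsto_id.atTop_div_const hn'
    have h2 := (hErr0.comp h1).const_mul (n:ℝ)
    simpa using h2
  -- zero cases
  have hz1 : Tendsto (fun c => S.E (trunc c (Sn 0))) atTop (nhds 0) := by
    have hzero : ∀ᶠ c in atTop, S.E (trunc c (Sn 0)) = 0 := by
      filter_upwards [eventually_ge_atTop (0:ℝ)] with c hc
      have h1 : trunc c (Sn 0) = fun _ => (0:ℝ) := by
        funext ω
        show SLEP.clamp c (Sn 0 ω) = 0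
        have h2 : Sn 0 ω = 0 := by simp [hSndef]
        rw [h2, SLEP.clamp_eq_self (by simpa using hc)]
      rw [h1, S.isConst 0]
    exact Tendsto.congr' (hzero.mono fun c h => h.symm) tendsto_const_nhds
  have hz2 : Tendsto (fun c => S.E (trunc c (fun ω => -Sn 0 ω))) atTop (nhds 0) := by
    have hzero : ∀ᶠ c in atTop, S.E (trunc c (fun ω => -Sn 0 ω)) = 0 := by
      filter_upwards [eventually_ge_atTop (0:ℝ)] with c hc
      have h1 : trunc c (fun ω => -Sn 0 ω) = fun _ => (0:ℝ) := by
        funext ω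
        show SLEP.clamp c (-Sn 0 ω) = 0
        have h2 : Sn 0 ω = 0 := by simp [hSndef]
        rw [h2, neg_zero, SLEP.clamp_eq_self (by simpa using hc)]
      rw [h1, S.isConst 0]
    exact Tendsto.congr' (hzero.mono fun c h => h.symm) tendsto_const_nhds
  -- existence of limits
  have hex1 : ∀ n : ℕ, ∃ L, Tendsto (fun c => S.E (trunc c (Sn n))) atTop (nhds L) := by
    intro n
    rcases Nat.eq_zero_or_pos n with rfl | hn
    · exact ⟨0, hz1⟩
    · exact SLEP.exists_trunc_lim S (hSnH n) (Nat.cast_nonneg n) (hBtend n hn) (htail n hn)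
  have hex2 : ∀ n : ℕ, ∃ L, Tendsto (fun c => S.E (trunc c (fun ω => -Sn n ω))) atTop (nhds L) := by
    intro n
    rcases Nat.eq_zero_or_pos n with rfl | hn
    · exact ⟨0, hz2⟩
    · exact SLEP.exists_trunc_lim S (hnegH n) (Nat.cast_nonneg n) (hBtend n hn) (htailneg n hn)
  choose ES hES using hex1
  choose mes hmes using hex2
  have hES0 : ES 0 = 0 := tendsto_nhds_unique (hES 0) hz1
  have hmes0 : mes 0 = 0 := tendsto_nhds_unique (hmes 0) hz2
  -- stationarity transfer
  have hshift : ∀ (k p : ℕ), 1 ≤ k → ∀ c : ℝ,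
      S.E (trunc c (fun ω => ∑ i ∈ Finset.range k, X (p + i) ω)) =
        S.E (trunc c (Sn k)) := by
    intro k p hk c
    have h := hstat k hk p (fun x => SLEP.clamp c x)
      ⟨1, SLEP.lip1_of_abs (SLEP.clamp_lip c)⟩
      ⟨|c|, fun x => SLEP.abs_clamp_le_abs_self c x⟩
    exact h.symm
  have hshiftneg : ∀ (k p : ℕ), 1 ≤ k → ∀ c : ℝ,
      S.E (trunc c (fun ω => -∑ i ∈ Finset.range k, X (p + i) ω)) =
        S.E (trunc c (fun ω => -Sn k ω)) := by
    intro k p hk c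
    have h := hstat k hk p (fun x => SLEP.clamp c (-x))
      ⟨1, SLEP.lip1_of_abs (fun a b => (SLEP.clamp_lip c (-a) (-b)).trans (by
        rw [show -a - -b = -(a - b) by ring, abs_neg]))⟩
      ⟨|c|, fun x => SLEP.abs_clamp_le_abs_self c (-x)⟩
    exact h.symm
  -- subadditivity of ES
  have hsubES : ∀ n k : ℕ, ES (n + k) ≤ ES n + ES k := by
    intro n k
    rcases Nat.eq_zero_or_pos n with rfl | hn
    · rw [hES0, zero_add, zero_add]
    rcases Nat.eq_zero_or_pos k with rfl | hk
    · rw [hES0, add_zero, add_zero]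
    have hAB : (fun ω => Sn n ω + (fun ω => ∑ i ∈ Finset.range k, X (n + i) ω) ω)
        = Sn (n + k) := by
      funext ω
      simp only [hSndef]
      rw [Finset.sum_range_add]
    have hBH : (fun ω => ∑ i ∈ Finset.range k, X (n + i) ω) ∈ S.H :=
      SLEP.mem_sum S (fun i ω => X (n + i) ω) (fun i => hH (n + i)) k
    have htailB : ∀ c, (k:ℝ) ≤ c → ∀ K, 0 ≤ K →
        S.E (fun ω => tl c K ((fun ω => ∑ i ∈ Finset.range k, X (n + i) ω) ω))
          ≤ k * Err (c / k) :=
      fun c hc K hK => SLEP.E_tl_block S hH hstat hErrB n hk hc hK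
    have hLB : Tendsto (fun c => S.E (trunc c (fun ω => ∑ i ∈ Finset.range k, X (n + i) ω)))
        atTop (nhds (ES k)) :=
      (hES k).congr fun c => (hshift k n hk c).symm
    have hLAB : Tendsto (fun c => S.E (trunc c
        (fun ω => Sn n ω + (fun ω => ∑ i ∈ Finset.range k, X (n + i) ω) ω)))
        atTop (nhds (ES (n + k))) := by
      rw [hAB]; exact hES (n + k)
    exact SLEP.lim_add_le S (hSnH n) hBH (Nat.cast_nonneg n) (Nat.cast_nonneg k)
      (hBtend n hn) (hBtend k hk) (htail n hn) htailB (hES n) hLB hLAB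
  -- subadditivity of mes
  have hsubmes : ∀ n k : ℕ, mes (n + k) ≤ mes n + mes k := by
    intro n k
    rcases Nat.eq_zero_or_pos n with rfl | hn
    · rw [hmes0, zero_add, zero_add]
    rcases Nat.eq_zero_or_pos k with rfl | hk
    · rw [hmes0, add_zero, add_zero]
    have hAB : (fun ω => (fun ω => -Sn n ω) ω +
        (fun ω => -∑ i ∈ Finset.range k, X (n + i) ω) ω) = (fun ω => -Sn (n + k) ω) := by
      funext ω
      simp only [hSndef]
      rw [Finset.sum_range_add]
      ring
    have hBH : (fun ω => -∑ i ∈ Finset.range k, X (n + i) ω) ∈ S.H := by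
      have h1 : (fun ω => ∑ i ∈ Finset.range k, X (n + i) ω) ∈ S.H :=
        SLEP.mem_sum S (fun i ω => X (n + i) ω) (fun i => hH (n + i)) k
      exact SLEP.mem_comp1 S zero_le_one (fun a b => by
        rw [one_mul, show -a - -b = -(a - b) by ring, abs_neg]) h1
    have htailB : ∀ c, (k:ℝ) ≤ c → ∀ K, 0 ≤ K →
        S.E (fun ω => tl c K ((fun ω => -∑ i ∈ Finset.range k, X (n + i) ω) ω))
          ≤ k * Err (c / k) := by
      intro c hc K hK
      have he : (fun ω => tl c K (-∑ i ∈ Finset.range k, X (n + i) ω))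
          = (fun ω => tl c K (∑ i ∈ Finset.range k, X (n + i) ω)) := by
        funext ω; rw [SLEP.tl_neg]
      rw [show (fun ω => tl c K ((fun ω => -∑ i ∈ Finset.range k, X (n + i) ω) ω))
        = (fun ω => tl c K (∑ i ∈ Finset.range k, X (n + i) ω)) from he]
      exact SLEP.E_tl_block S hH hstat hErrB n hk hc hK
    have hLB : Tendsto (fun c => S.E (trunc c (fun ω => -∑ i ∈ Finset.range k, X (n + i) ω)))
        atTop (nhds (mes k)) :=
      (hmes k).congr fun c => (hshiftneg k n hk c).symm
    have hLAB : Tendsto (fun c => S.E (trunc c (fun ω => (fun ω => -Sn n ω) ω +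
        (fun ω => -∑ i ∈ Finset.range k, X (n + i) ω) ω)))
        atTop (nhds (mes (n + k))) := by
      rw [hAB]; exact hmes (n + k)
    exact SLEP.lim_add_le S (hnegH n) hBH (Nat.cast_nonneg n) (Nat.cast_nonneg k)
      (hBtend n hn) (hBtend k hk) (htailneg n hn) htailB (hmes n) hLB hLAB
  -- es ≤ ES
  have hcomp : ∀ n : ℕ, 0 ≤ ES n + mes n := by
    intro n
    have hptc : ∀ᶠ c in atTop,
        (0:ℝ) ≤ S.E (trunc c (Sn n)) + S.E (trunc c (fun ω => -Sn n ω)) := by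
      filter_upwards [eventually_ge_atTop (0:ℝ)] with c hc
      have h0 : (fun ω => trunc c (Sn n) ω + trunc c (fun ω => -Sn n ω) ω)
          = fun _ => (0:ℝ) := by
        funext ω
        show SLEP.clamp c (Sn n ω) + SLEP.clamp c (-Sn n ω) = 0
        rw [SLEP.clamp_neg hc]; ring
      have h1 := S.subadd _ _ (SLEP.mem_trunc S (hSnH n) c) (SLEP.mem_trunc S (hnegH n) c)
      rw [h0, S.isConst 0] at h1
      linarith
    exact le_of_tendsto_of_tendsto tendsto_const_nhds ((hES n).add (hmes n)) hptc
  -- linear upper bounds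
  have hESle : ∀ n : ℕ, 1 ≤ n → ES n ≤ n * ES 1 := by
    intro n hn
    induction n with
    | zero => omega
    | succ n ih =>
      rcases Nat.eq_zero_or_pos n with rfl | hn'
      · simp
      · have h1 := hsubES n 1
        have h2 := ih hn'
        push_cast
        linarith
  have hmesle : ∀ n : ℕ, 1 ≤ n → mes n ≤ n * mes 1 := by
    intro n hn
    induction n with
    | zero => omega
    | succ n ih =>
      rcases Nat.eq_zero_or_pos n with rfl | hn'
      · simp
      · have h1 := hsubmes n 1
        have h2 := ih hn'
        push_cast
        linarith
  have hsubad : Subadditive ES := fun a b => hsubES a b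
  have hsubadm : Subadditive mes := fun a b => hsubmes a b
  have hbddES : BddBelow (Set.range fun n : ℕ => ES n / n) := by
    refine ⟨min (-(mes 1)) 0, ?_⟩
    rintro r ⟨n, rfl⟩
    rcases Nat.eq_zero_or_pos n with rfl | hn
    · simp only [Nat.cast_zero, div_zero]
      exact min_le_right _ _
    · have h1 : -(mes n) ≤ ES n := by have := hcomp n; linarith
      have h2 : mes n ≤ n * mes 1 := hmesle n hn
      have hn' : (0:ℝ) < n := by exact_mod_cast hn
      have h3 : -(mes 1) ≤ ES n / n := by
        rw [le_div_iff₀ hn']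
        nlinarith
      exact le_trans (min_le_left _ _) h3
  have hbddmes : BddBelow (Set.range fun n : ℕ => mes n / n) := by
    refine ⟨min (-(ES 1)) 0, ?_⟩
    rintro r ⟨n, rfl⟩
    rcases Nat.eq_zero_or_pos n with rfl | hn
    · simp only [Nat.cast_zero, div_zero]
      exact min_le_right _ _
    · have h1 : -(ES n) ≤ mes n := by have := hcomp n; linarith
      have h2 : ES n ≤ n * ES 1 := hESle n hn
      have hn' : (0:ℝ) < n := by exact_mod_cast hn
      have h3 : -(ES 1) ≤ mes n / n := by
        rw [le_div_iff₀ hn']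
        nlinarith
      exact le_trans (min_le_left _ _) h3
  have hμb := hsubad.tendsto_lim hbddES
  have hμlm := hsubadm.tendsto_lim hbddmes
  have hX0 : Sn 1 = X 0 := by funext ω; simp [hSndef]
  refine ⟨ES, fun n => -(mes n), ES 1, -(mes 1), hsubad.lim, -(hsubadm.lim),
    fun n => hES n, fun n => (hmes n).neg, ?_, ?_, hμb, ?_, ?_, ?_, ?_⟩
  · have h := hES 1
    rw [hX0] at h
    exact h
  · have h := (hmes 1).neg
    simp only [hX0] at h
    exact h
  · have h := hμlm.neg
    refine h.congr fun n => ?_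
    rw [neg_div]
  · -- e1 ≤ μl
    have h := hsubadm.lim_le_div hbddmes one_ne_zero
    simp only [Nat.cast_one, div_one] at h
    linarith
  · -- μl ≤ μb
    have hl : Tendsto (fun n : ℕ => -(mes n) / n) atTop (nhds (-(hsubadm.lim))) := by
      have h := hμlm.neg
      refine h.congr fun n => ?_
      rw [neg_div]
    refine le_of_tendsto_of_tendsto hl hμb ?_
    filter_upwards [eventually_ge_atTop 1] with n hn
    have hn' : (0:ℝ) < n := by exact_mod_cast hn
    have h1 : -(mes n) ≤ ES n := by have := hcomp n; linarith
    gcongr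
  · -- μb ≤ E1
    have h := hsubad.lim_le_div hbddES one_ne_zero
    simpa using h

end
end
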